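/- arXiv:1312.3122 — 4 statements merged into one kernel-verified Lean document; each statement's English description precedes it below -/
import Mathlib

section
/- Let f: 𝔻 → ℂ be twice continuously differentiable on the open unit disk 𝔻 with Re(conj(f)·Δf) ≥ 0 on 𝔻, where Δ is the Laplacian. Then for every p ∈ [4,∞), the function |f|^p is subharmonic on 𝔻; in particular Δ(|f|^p) ≥ 0 wherever f is nonzero. -/
open Complex Metric

/-- The (real) Laplacian Δg = g_xx + g_yy of a function on ℂ. -/
noncomputable def lap {E : Type*} [NormedAddCommGroup E] [NormedSpace ℝ E]
    (g : ℂ → E) (z : ℂ) : E :=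
  fderiv ℝ (fun w => fderiv ℝ g w 1) z 1 +
    fderiv ℝ (fun w => fderiv ℝ g w Complex.I) z Complex.I

open Filter RealInnerProductSpace in
lemma aux_second_deriv (f : ℂ → ℂ) (z : ℂ) (hf2 : ContDiffAt ℝ 2 f z) (hfz : f z ≠ 0)
    (q : ℝ) (hq : 1 ≤ q) (e : ℂ) :
    fderiv ℝ (fun w => fderiv ℝ (fun w => (‖f w‖ ^ 2 : ℝ) ^ q) w e) z e
      = q * (q - 1) * (‖f z‖ ^ 2 : ℝ) ^ (q - 2) * (2 * ⟪f z, fderiv ℝ f z e⟫) ^ 2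
        + q * (‖f z‖ ^ 2 : ℝ) ^ (q - 1) *
          (2 * ‖fderiv ℝ f z e‖ ^ 2 + 2 * ⟪f z, fderiv ℝ (fderiv ℝ f) z e e⟫) := by
  have hf1 : ∀ᶠ w in nhds z, ContDiffAt ℝ 2 f w := hf2.eventually (by norm_num)
  have hne : ∀ᶠ w in nhds z, f w ≠ 0 := hf2.continuousAt.eventually_ne hfz
  have hD : ∀ᶠ w in nhds z, HasFDerivAt (fun w => (‖f w‖ ^ 2 : ℝ) ^ q)
      ((q * (‖f w‖ ^ 2 : ℝ) ^ (q - 1)) •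
        ((2:ℕ) • ((innerSL ℝ) (f w)).comp (fderiv ℝ f w))) w := by
    filter_upwards [hf1, hne] with w hw hwne
    exact ((hw.differentiableAt (by norm_num)).hasFDerivAt.norm_sq).rpow_const
      (Or.inl (pow_ne_zero _ (norm_ne_zero_iff.mpr hwne)))
  have hEq : (fun w => fderiv ℝ (fun w => (‖f w‖ ^ 2 : ℝ) ^ q) w e)
      =ᶠ[nhds z] (fun w => (q * (‖f w‖ ^ 2 : ℝ) ^ (q - 1)) * (2 * ⟪f w, fderiv ℝ f w e⟫)) := by
    filter_upwards [hD] with w hw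
    rw [hw.fderiv]
    simp only [ContinuousLinearMap.smul_apply, ContinuousLinearMap.comp_apply,
      ContinuousLinearMap.coe_smul', Pi.smul_apply, innerSL_apply_apply, smul_eq_mul, nsmul_eq_mul]
    push_cast
    ring
  rw [hEq.fderiv_eq]
  have hne0 : (‖f z‖ ^ 2 : ℝ) ≠ 0 := pow_ne_zero _ (norm_ne_zero_iff.mpr hfz)
  have hdf : HasFDerivAt f (fderiv ℝ f z) z :=
    (hf2.differentiableAt (by norm_num)).hasFDerivAt
  have hB : HasFDerivAt (fderiv ℝ f) (fderiv ℝ (fderiv ℝ f) z) z :=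
    ((hf2.fderiv_right (m := 1) (by norm_num)).differentiableAt one_ne_zero).hasFDerivAt
  have hG : HasFDerivAt (fun w => fderiv ℝ f w e)
      ((fderiv ℝ (fderiv ℝ f) z).flip e) z := by
    simpa using hB.clm_apply (hasFDerivAt_const e z)
  have hc : HasFDerivAt (fun w => 2 * ⟪f w, fderiv ℝ f w e⟫)
      ((2:ℝ) • ((fderivInnerCLM ℝ (f z, fderiv ℝ f z e)).comp
        ((fderiv ℝ f z).prod ((fderiv ℝ (fderiv ℝ f) z).flip e)))) z :=
    (hdf.inner ℝ hG).const_mul 2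
  have hb : HasFDerivAt (fun w => q * (‖f w‖ ^ 2 : ℝ) ^ (q - 1))
      (q • (((q - 1) * (‖f z‖ ^ 2 : ℝ) ^ (q - 1 - 1)) •
        ((2:ℕ) • ((innerSL ℝ) (f z)).comp (fderiv ℝ f z)))) z :=
    (hdf.norm_sq.rpow_const (Or.inl hne0)).const_mul q
  have hmul : HasFDerivAt
      (fun w => q * (‖f w‖ ^ 2 : ℝ) ^ (q - 1) * (2 * ⟪f w, fderiv ℝ f w e⟫))
      ((q * (‖f z‖ ^ 2 : ℝ) ^ (q - 1)) •
          ((2:ℝ) • ((fderivInnerCLM ℝ (f z, fderiv ℝ f z e)).comp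
            ((fderiv ℝ f z).prod ((fderiv ℝ (fderiv ℝ f) z).flip e))))
        + (2 * ⟪f z, fderiv ℝ f z e⟫) •
          (q • (((q - 1) * (‖f z‖ ^ 2 : ℝ) ^ (q - 1 - 1)) •
            ((2:ℕ) • ((innerSL ℝ) (f z)).comp (fderiv ℝ f z))))) z := hb.mul hc
  rw [hmul.fderiv]
  have hq2 : q - 1 - 1 = q - 2 := by ring
  rw [hq2]
  simp only [ContinuousLinearMap.add_apply, ContinuousLinearMap.smul_apply,
    ContinuousLinearMap.comp_apply, ContinuousLinearMap.prod_apply,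
    ContinuousLinearMap.flip_apply, ContinuousLinearMap.coe_smul', Pi.smul_apply,
    innerSL_apply_apply, fderivInnerCLM_apply, smul_eq_mul, nsmul_eq_mul,
    real_inner_self_eq_norm_sq]
  push_cast
  ring

open Filter RealInnerProductSpace

/-- If f ∈ C²(𝔻) and Re(conj(f)·Δf) ≥ 0 on 𝔻, then for every
p ∈ [4,∞), Δ(|f|^p) ≥ 0 wherever f is nonzero (|f|^p is subharmonic). -/
theorem abs_rpow_subharmonic (f : ℂ → ℂ)
    (hf : ContDiffOn ℝ 2 f (ball (0:ℂ) 1))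
    (hRe : ∀ z ∈ ball (0:ℂ) 1, 0 ≤ ((starRingEnd ℂ) (f z) * lap f z).re)
    (p : ℝ) (hp : 4 ≤ p) :
    ∀ z ∈ ball (0:ℂ) 1, f z ≠ 0 → 0 ≤ lap (fun w => ‖f w‖ ^ p) z := by
  intro z hz hfz
  have hf2 : ContDiffAt ℝ 2 f z := hf.contDiffAt (isOpen_ball.mem_nhds hz)
  set q : ℝ := p / 2 with hqdef
  have hq1 : 1 ≤ q := by simp only [hqdef]; linarith
  have hfun : (fun w => ‖f w‖ ^ p) = fun w => (‖f w‖ ^ 2 : ℝ) ^ q := by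
    funext w
    rw [← Real.rpow_natCast ‖f w‖ 2, ← Real.rpow_mul (norm_nonneg _)]
    norm_num
    congr 1
    ring
  rw [hfun]
  show 0 ≤ fderiv ℝ (fun w => fderiv ℝ (fun w => (‖f w‖ ^ 2 : ℝ) ^ q) w 1) z 1 +
      fderiv ℝ (fun w => fderiv ℝ (fun w => (‖f w‖ ^ 2 : ℝ) ^ q) w Complex.I) z Complex.I
  rw [aux_second_deriv f z hf2 hfz q hq1 1, aux_second_deriv f z hf2 hfz q hq1 Complex.I]
  -- identify lap f z with the second derivatives
  have hB : HasFDerivAt (fderiv ℝ f) (fderiv ℝ (fderiv ℝ f) z) z :=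
    ((hf2.fderiv_right (m := 1) (by norm_num)).differentiableAt one_ne_zero).hasFDerivAt
  have hG : ∀ e : ℂ, fderiv ℝ (fun w => fderiv ℝ f w e) z
      = (fderiv ℝ (fderiv ℝ f) z).flip e := by
    intro e
    have : HasFDerivAt (fun w => fderiv ℝ f w e) ((fderiv ℝ (fderiv ℝ f) z).flip e) z := by
      simpa using hB.clm_apply (hasFDerivAt_const e z)
    exact this.fderiv
  have hlapf : lap f z = fderiv ℝ (fderiv ℝ f) z 1 1
      + fderiv ℝ (fderiv ℝ f) z Complex.I Complex.I := by
    simp only [lap, hG]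
    simp [ContinuousLinearMap.flip_apply]
  have hinner : 0 ≤ ⟪f z, fderiv ℝ (fderiv ℝ f) z 1 1⟫
      + ⟪f z, fderiv ℝ (fderiv ℝ f) z Complex.I Complex.I⟫ := by
    rw [← inner_add_right, ← hlapf, Complex.inner]
    rw [mul_comm]
    exact hRe z hz
  have hu : (0:ℝ) < ‖f z‖ ^ 2 := pow_pos (norm_pos_iff.mpr hfz) 2
  have h1 : (0:ℝ) ≤ q * (q - 1) * (‖f z‖ ^ 2 : ℝ) ^ (q - 2) :=
    mul_nonneg (mul_nonneg (by linarith) (by linarith)) (Real.rpow_nonneg hu.le _)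
  have h2 : (0:ℝ) < q * (‖f z‖ ^ 2 : ℝ) ^ (q - 1) :=
    mul_pos (by linarith) (Real.rpow_pos_of_pos hu _)
  nlinarith [sq_nonneg (2 * ⟪f z, fderiv ℝ f z 1⟫), sq_nonneg (2 * ⟪f z, fderiv ℝ f z Complex.I⟫),
    sq_nonneg ‖fderiv ℝ f z 1‖, sq_nonneg ‖fderiv ℝ f z Complex.I‖,
    mul_nonneg h1 (sq_nonneg (2 * ⟪f z, fderiv ℝ f z 1⟫)),
    mul_nonneg h1 (sq_nonneg (2 * ⟪f z, fderiv ℝ f z Complex.I⟫)),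
    mul_nonneg h2.le (sq_nonneg ‖fderiv ℝ f z 1‖),
    mul_nonneg h2.le (sq_nonneg ‖fderiv ℝ f z Complex.I‖),
    mul_nonneg h2.le hinner]
end

section
/- Let f: 𝔻 → ℂ be twice continuously differentiable on the open unit disk with Re(conj(f)·Δf) ≥ 0. Then for every p ∈ [2,∞), the integral means M_p^p(r,f) = (1/2π) ∫₀^{2π} |f(re^{iθ})|^p dθ form an increasing function of r on (0,1). -/
open Complex Metric MeasureTheory

open Filter Topology intervalIntegral

private lemma bilin_expand (B : ℂ →L[ℝ] ℂ →L[ℝ] ℝ) (a b : ℝ) :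
    B (a • (1:ℂ) + b • Complex.I) (a • (1:ℂ) + b • Complex.I)
      = a^2 * B 1 1 + a*b*(B 1 Complex.I + B Complex.I 1) + b^2 * B Complex.I Complex.I := by
  simp only [ContinuousLinearMap.map_add, ContinuousLinearMap.map_smul,
    ContinuousLinearMap.add_apply, ContinuousLinearMap.smul_apply, smul_eq_mul]
  ring

private lemma bilin_trace (B : ℂ →L[ℝ] ℂ →L[ℝ] ℝ) (z : ℂ) (hz : ‖z‖ = 1) :
    B z z + B (Complex.I * z) (Complex.I * z) = B 1 1 + B Complex.I Complex.I := by
  have h1 : z.re • (1:ℂ) + z.im • Complex.I = z := by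
    apply Complex.ext <;> simp
  have h2 : (-z.im) • (1:ℂ) + z.re • Complex.I = Complex.I * z := by
    apply Complex.ext <;> simp
  have e1 := bilin_expand B z.re z.im
  have e2 := bilin_expand B (-z.im) z.re
  rw [h1] at e1
  rw [h2] at e2
  have hsq : z.re^2 + z.im^2 = 1 := by
    have h : Complex.normSq z = 1 := by
      rw [← Complex.sq_norm, show ‖z‖ = 1 from hz]; norm_num
    rw [Complex.normSq_apply] at h; nlinarith
  rw [e1, e2]; linear_combination ((B 1) 1 + (B Complex.I) Complex.I) * hsq

set_option maxHeartbeats 1000000 in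
private theorem mono_core (u : ℂ → ℝ) (hu : ContDiffOn ℝ 2 u (ball (0:ℂ) 1))
    (hlap : ∀ z ∈ ball (0:ℂ) 1, 0 ≤ lap u z) :
    MonotoneOn (fun r : ℝ => ∫ θ in (0:ℝ)..(2 * Real.pi),
      u ((r : ℂ) * Complex.exp (θ * Complex.I))) (Set.Ioo 0 1) := by
  have twoπ : (0:ℝ) ≤ 2 * Real.pi := by positivity
  set A : ℂ → ℂ →L[ℝ] ℝ := fderiv ℝ u with hA_def
  have hball : IsOpen (ball (0:ℂ) 1) := isOpen_ball
  have hu_at : ∀ z ∈ ball (0:ℂ) 1, DifferentiableAt ℝ u z := fun z hz =>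
    (hu.contDiffAt (hball.mem_nhds hz)).differentiableAt two_ne_zero
  have hu_cont : ContinuousOn u (ball (0:ℂ) 1) := hu.continuousOn
  have hA1 : ContDiffOn ℝ 1 A (ball 0 1) := hu.fderiv_of_isOpen hball (by norm_num)
  have hA_cont : ContinuousOn A (ball 0 1) := hA1.continuousOn
  have hA_at : ∀ z ∈ ball (0:ℂ) 1, DifferentiableAt ℝ A z := fun z hz =>
    (hA1.contDiffAt (hball.mem_nhds hz)).differentiableAt one_ne_zero
  set B : ℂ → ℂ →L[ℝ] ℂ →L[ℝ] ℝ := fderiv ℝ A with hB_def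
  have hB_cont : ContinuousOn B (ball 0 1) :=
    hA1.continuousOn_fderiv_of_isOpen hball le_rfl
  -- the circle map
  set c : ℝ → ℝ → ℂ := fun r θ => circleMap 0 r θ with hc_def
  have hc_eq : ∀ r θ : ℝ, c r θ = (r : ℂ) * Complex.exp (θ * Complex.I) := by
    intro r θ; simp [hc_def, circleMap]
  set E : ℝ → ℂ := fun θ => Complex.exp (θ * Complex.I) with hE_def
  have hE_norm : ∀ θ : ℝ, ‖E θ‖ = 1 := fun θ => Complex.norm_exp_ofReal_mul_I θ
  have hc_norm : ∀ r θ : ℝ, ‖c r θ‖ = |r| := by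
    intro r θ; rw [hc_eq, norm_mul]; simp [hE_norm θ, Real.norm_eq_abs]
  have hc_mem : ∀ {r : ℝ}, |r| < 1 → ∀ θ, c r θ ∈ ball (0:ℂ) 1 := by
    intro r hr θ
    simp only [mem_ball, dist_zero_right, hc_norm]
    exact hr
  have hc_smul : ∀ r θ : ℝ, c r θ = r • E θ := by
    intro r θ; rw [hc_eq, Complex.real_smul]
  -- derivative of c in r
  have hc_r : ∀ (r θ : ℝ), HasDerivAt (fun s : ℝ => c s θ) (E θ) r := by
    intro r θ
    simp only [hc_smul]
    simpa using (hasDerivAt_id r).smul_const (E θ)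
  -- derivative of c in θ
  have hc_θ : ∀ (r θ : ℝ), HasDerivAt (fun t : ℝ => c r t) (c r θ * Complex.I) θ := by
    intro r θ; exact hasDerivAt_circleMap 0 r θ
  -- continuity of c jointly
  have hc_cont : Continuous (fun pq : ℝ × ℝ => c pq.1 pq.2) := by
    simp only [hc_def, circleMap]; continuity
  -- continuity helpers
  have contc : ∀ r : ℝ, Continuous (c r) := fun r => continuous_circleMap 0 r
  have contE : Continuous E := by
    simp only [hE_def]
    exact Complex.continuous_exp.comp (by continuity)
  -- second derivative representation of lap
  have hlap_eq : ∀ z ∈ ball (0:ℂ) 1, lap u z = B z 1 1 + B z Complex.I Complex.I := by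
    intro z hz
    have hAz : HasFDerivAt A (B z) z := (hA_at z hz).hasFDerivAt
    have key : ∀ e d : ℂ, fderiv ℝ (fun w => fderiv ℝ u w e) z d = B z d e := by
      intro e d
      have h1 : HasFDerivAt (fun w => (ContinuousLinearMap.apply ℝ ℝ e) (A w))
          ((ContinuousLinearMap.apply ℝ ℝ e).comp (B z)) z :=
        (ContinuousLinearMap.apply ℝ ℝ e).hasFDerivAt.comp z hAz
      have h2 : (fun w => fderiv ℝ u w e) = fun w => (ContinuousLinearMap.apply ℝ ℝ e) (A w) :=
        rfl
      rw [h2, h1.fderiv]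
      rfl
    simp only [lap, key]
  -- the integral means and their candidate derivatives
  set g : ℝ → ℝ := fun r => ∫ θ in (0:ℝ)..(2*Real.pi), u (c r θ) with hg_def
  set g₁ : ℝ → ℝ := fun r => ∫ θ in (0:ℝ)..(2*Real.pi), A (c r θ) (E θ) with hg1_def
  set g₂ : ℝ → ℝ := fun r => ∫ θ in (0:ℝ)..(2*Real.pi), B (c r θ) (E θ) (E θ) with hg2_def
  -- pointwise derivative in r of the integrands
  have hDer1 : ∀ (x θ : ℝ), |x| < 1 → HasDerivAt (fun y => u (c y θ)) (A (c x θ) (E θ)) x := by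
    intro x θ hx
    exact (hu_at _ (hc_mem hx θ)).hasFDerivAt.comp_hasDerivAt x (hc_r x θ)
  have hDer2 : ∀ (x θ : ℝ), |x| < 1 →
      HasDerivAt (fun y => A (c y θ) (E θ)) (B (c x θ) (E θ) (E θ)) x := by
    intro x θ hx
    have h1 : HasDerivAt (fun y => A (c y θ)) ((B (c x θ)) (E θ)) x :=
      (hA_at _ (hc_mem hx θ)).hasFDerivAt.comp_hasDerivAt x (hc_r x θ)
    simpa using h1.clm_apply (hasDerivAt_const x (E θ))
  -- geometry of the annulus of radii
  have hgeom : ∀ r₀ : ℝ, |r₀| < 1 →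
      0 < (1 - |r₀|)/2 ∧ (1 + |r₀|)/2 < 1 ∧
      ∀ x ∈ ball r₀ ((1 - |r₀|)/2), ∀ θ : ℝ, c x θ ∈ closedBall (0:ℂ) ((1 + |r₀|)/2) := by
    intro r₀ hr₀
    refine ⟨by linarith, by linarith, ?_⟩
    intro x hx θ
    simp only [mem_ball, Real.dist_eq] at hx
    have h1 : |x| ≤ (1 + |r₀|)/2 := by
      have := abs_sub_abs_le_abs_sub x r₀
      linarith
    simp only [mem_closedBall, dist_zero_right, hc_norm]
    exact h1
  have hballmem : ∀ x ∈ ball (0:ℝ) 1, |x| < 1 := by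
    intro x hx; simpa [Real.dist_eq] using hx
  -- Claim A : g' = g₁ on (-1,1)
  have claimA : ∀ r₀ : ℝ, |r₀| < 1 → HasDerivAt g (g₁ r₀) r₀ := by
    intro r₀ hr₀
    obtain ⟨hε, hs1, hmem⟩ := hgeom r₀ hr₀
    have hsub : closedBall (0:ℂ) ((1 + |r₀|)/2) ⊆ ball 0 1 := closedBall_subset_ball hs1
    obtain ⟨CA, hCA⟩ : ∃ C, ∀ z ∈ closedBall (0:ℂ) ((1 + |r₀|)/2), ‖A z‖ ≤ C :=
      (isCompact_closedBall (0:ℂ) ((1 + |r₀|)/2)).exists_bound_of_continuousOn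
        (hA_cont.mono hsub)
    have hxabs : ∀ x ∈ ball r₀ ((1 - |r₀|)/2), |x| < 1 := by
      intro x hx
      have := hmem x hx 0
      simp only [mem_closedBall, dist_zero_right, hc_norm] at this
      linarith
    have key := hasDerivAt_integral_of_dominated_loc_of_deriv_le (μ := volume)
      (F := fun x θ => u (c x θ)) (F' := fun x θ => A (c x θ) (E θ))
      (bound := fun _ => CA) (a := 0) (b := 2*Real.pi) (x₀ := r₀) (Metric.ball_mem_nhds r₀ hε) ?_ ?_ ?_ ?_ ?_ ?_
    · exact key.2
    · filter_upwards [eventually_abs_sub_lt r₀ (by linarith : 0 < 1 - |r₀|)] with x hx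
      have hx1 : |x| < 1 := by
        have := abs_sub_abs_le_abs_sub x r₀
        linarith
      exact (hu_cont.comp_continuous (contc x) (hc_mem hx1)).aestronglyMeasurable
    · exact (hu_cont.comp_continuous (contc r₀) (hc_mem hr₀)).intervalIntegrable _ _
    · exact ((hA_cont.comp_continuous (contc r₀) (hc_mem hr₀)).clm_apply
        contE).aestronglyMeasurable
    · refine ae_of_all _ fun θ _ x hx => ?_
      calc ‖A (c x θ) (E θ)‖ ≤ ‖A (c x θ)‖ * ‖E θ‖ := (A (c x θ)).le_opNorm (E θ)
        _ = ‖A (c x θ)‖ := by rw [hE_norm, mul_one]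
        _ ≤ CA := hCA _ (hmem x hx θ)
    · exact continuous_const.intervalIntegrable _ _
    · exact ae_of_all _ fun θ _ x hx => hDer1 x θ (hxabs x hx)
  -- Claim B : g₁' = g₂ on (-1,1)
  have claimB : ∀ r₀ : ℝ, |r₀| < 1 → HasDerivAt g₁ (g₂ r₀) r₀ := by
    intro r₀ hr₀
    obtain ⟨hε, hs1, hmem⟩ := hgeom r₀ hr₀
    have hsub : closedBall (0:ℂ) ((1 + |r₀|)/2) ⊆ ball 0 1 := closedBall_subset_ball hs1
    obtain ⟨CB, hCB⟩ : ∃ C, ∀ z ∈ closedBall (0:ℂ) ((1 + |r₀|)/2), ‖B z‖ ≤ C :=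
      (isCompact_closedBall (0:ℂ) ((1 + |r₀|)/2)).exists_bound_of_continuousOn
        (f := B) (E := ℂ →L[ℝ] ℂ →L[ℝ] ℝ) (hB_cont.mono hsub)
    have hxabs : ∀ x ∈ ball r₀ ((1 - |r₀|)/2), |x| < 1 := by
      intro x hx
      have := hmem x hx 0
      simp only [mem_closedBall, dist_zero_right, hc_norm] at this
      linarith
    have key := hasDerivAt_integral_of_dominated_loc_of_deriv_le (μ := volume)
      (F := fun x θ => A (c x θ) (E θ)) (F' := fun x θ => B (c x θ) (E θ) (E θ))
      (bound := fun _ => CB) (a := 0) (b := 2*Real.pi) (x₀ := r₀) (Metric.ball_mem_nhds r₀ hε) ?_ ?_ ?_ ?_ ?_ ?_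
    · exact key.2
    · filter_upwards [eventually_abs_sub_lt r₀ (by linarith : 0 < 1 - |r₀|)] with x hx
      have hx1 : |x| < 1 := by
        have := abs_sub_abs_le_abs_sub x r₀
        linarith
      exact ((hA_cont.comp_continuous (contc x) (hc_mem hx1)).clm_apply
        contE).aestronglyMeasurable
    · exact ((hA_cont.comp_continuous (contc r₀) (hc_mem hr₀)).clm_apply
        contE).intervalIntegrable _ _
    · exact (((hB_cont.comp_continuous (contc r₀) (hc_mem hr₀)).clm_apply contE).clm_apply
        contE).aestronglyMeasurable
    · refine ae_of_all _ fun θ _ x hx => ?_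
      calc ‖B (c x θ) (E θ) (E θ)‖ ≤ ‖B (c x θ) (E θ)‖ * ‖E θ‖ :=
            (B (c x θ) (E θ)).le_opNorm (E θ)
        _ ≤ ‖B (c x θ)‖ * ‖E θ‖ * ‖E θ‖ := by
            have := (B (c x θ)).le_opNorm (E θ)
            have h0 : (0:ℝ) ≤ ‖E θ‖ := norm_nonneg _
            nlinarith [norm_nonneg (B (c x θ) (E θ))]
        _ = ‖B (c x θ)‖ := by rw [hE_norm, mul_one, mul_one]
        _ ≤ CB := hCB _ (hmem x hx θ)
    · exact continuous_const.intervalIntegrable _ _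
    · exact ae_of_all _ fun θ _ x hx => hDer2 x θ (hxabs x hx)
  -- the θ-derivative trick: ∫ d/dθ [A(c)(I·c)] dθ = 0
  have claimQ : ∀ r : ℝ, 0 < r → r < 1 →
      ∫ θ in (0:ℝ)..(2*Real.pi),
        (B (c r θ) (Complex.I * c r θ) (Complex.I * c r θ) - r * A (c r θ) (E θ)) = 0 := by
    intro r h0 h1'
    have hr : |r| < 1 := by rw [_root_.abs_of_pos h0]; exact h1'
    have hder : ∀ θ ∈ Set.uIcc (0:ℝ) (2*Real.pi),
        HasDerivAt (fun t => A (c r t) (Complex.I * c r t))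
          (B (c r θ) (Complex.I * c r θ) (Complex.I * c r θ) - r * A (c r θ) (E θ)) θ := by
      intro θ _
      have hmem := hc_mem hr θ
      have h1 : HasDerivAt (fun t => A (c r t)) ((B (c r θ)) (c r θ * Complex.I)) θ :=
        (hA_at _ hmem).hasFDerivAt.comp_hasDerivAt θ (hc_θ r θ)
      have h2 : HasDerivAt (fun t => Complex.I * c r t) (Complex.I * (c r θ * Complex.I)) θ :=
        (hc_θ r θ).const_mul Complex.I
      have h3 := h1.clm_apply h2
      have hIcI : Complex.I * (c r θ * Complex.I) = -(c r θ) := by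
        have h6 : Complex.I * (c r θ * Complex.I) = Complex.I * Complex.I * c r θ := by ring
        rw [h6, Complex.I_mul_I]; ring
      have h4 : (A (c r θ)) (Complex.I * (c r θ * Complex.I)) = -(r * A (c r θ) (E θ)) := by
        rw [hIcI, map_neg, hc_smul, ContinuousLinearMap.map_smul, smul_eq_mul]
      have h5 : c r θ * Complex.I = Complex.I * c r θ := mul_comm _ _
      refine h3.congr_deriv ?_
      rw [h4, h5]; ring
    have hint : IntervalIntegrable (fun θ =>
        B (c r θ) (Complex.I * c r θ) (Complex.I * c r θ) - r * A (c r θ) (E θ))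
        volume 0 (2*Real.pi) := by
      apply Continuous.intervalIntegrable
      have cB : Continuous fun θ => B (c r θ) := hB_cont.comp_continuous (contc r) (hc_mem hr)
      have cA : Continuous fun θ => A (c r θ) := hA_cont.comp_continuous (contc r) (hc_mem hr)
      have cIc : Continuous fun θ => Complex.I * c r θ := continuous_const.mul (contc r)
      exact ((cB.clm_apply cIc).clm_apply cIc).sub
        (continuous_const.mul (cA.clm_apply contE))
    rw [intervalIntegral.integral_eq_sub_of_hasDerivAt hder hint]
    have hper : c r (2*Real.pi) = c r 0 := by
      have := (periodic_circleMap 0 r) 0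
      simpa [hc_def] using this
    rw [hper]
    ring
  -- key inequality: g₁ r + r * g₂ r ≥ 0 on (0,1), via trace identity
  have keyIneq : ∀ r : ℝ, 0 < r → r < 1 → g₁ r + r * g₂ r =
      r * ∫ θ in (0:ℝ)..(2*Real.pi), (B (c r θ) 1 1 + B (c r θ) Complex.I Complex.I) := by
    intro r h0 h1'
    have hr : |r| < 1 := by rw [_root_.abs_of_pos h0]; exact h1'
    have cB : Continuous fun θ => B (c r θ) := hB_cont.comp_continuous (contc r) (hc_mem hr)
    have cA : Continuous fun θ => A (c r θ) := hA_cont.comp_continuous (contc r) (hc_mem hr)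
    have cIc : Continuous fun θ => Complex.I * c r θ := continuous_const.mul (contc r)
    -- rewrite the q-integral using linearity
    have hi1 : IntervalIntegrable (fun θ =>
        B (c r θ) (Complex.I * c r θ) (Complex.I * c r θ)) volume 0 (2*Real.pi) :=
      ((cB.clm_apply cIc).clm_apply cIc).intervalIntegrable _ _
    have hi2 : IntervalIntegrable (fun θ => r * A (c r θ) (E θ)) volume 0 (2*Real.pi) :=
      (continuous_const.mul (cA.clm_apply contE)).intervalIntegrable _ _
    have hsplit := intervalIntegral.integral_sub hi1 hi2
    rw [claimQ r h0 h1'] at hsplit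
    have hq : ∫ θ in (0:ℝ)..(2*Real.pi), B (c r θ) (Complex.I * c r θ) (Complex.I * c r θ)
        = r * g₁ r := by
      have : ∀ θ : ℝ, r * (A (c r θ) (E θ)) = r * A (c r θ) (E θ) := fun _ => rfl
      have h5 : (∫ θ in (0:ℝ)..(2*Real.pi), r * A (c r θ) (E θ)) = r * g₁ r := by
        rw [hg1_def]
        simp only []
        rw [← intervalIntegral.integral_const_mul]
      linarith [hsplit.symm, h5]
    -- trace identity pointwise
    have htr : ∀ θ : ℝ, B (c r θ) (E θ) (E θ)
        = (B (c r θ) 1 1 + B (c r θ) Complex.I Complex.I)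
          - (1/(r*r)) * B (c r θ) (Complex.I * c r θ) (Complex.I * c r θ) := by
      intro θ
      have hIc : Complex.I * c r θ = r • (Complex.I * E θ) := by
        rw [hc_smul, Complex.real_smul, Complex.real_smul]; ring
      have hBsc : B (c r θ) (Complex.I * c r θ) (Complex.I * c r θ)
          = (r*r) * B (c r θ) (Complex.I * E θ) (Complex.I * E θ) := by
        rw [hIc]
        simp only [ContinuousLinearMap.map_smul, ContinuousLinearMap.smul_apply, smul_eq_mul]
        ring
      have := bilin_trace (B (c r θ)) (E θ) (hE_norm θ)
      rw [hBsc]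
      field_simp
      linarith [this]
    have hintE : IntervalIntegrable (fun θ => B (c r θ) (E θ) (E θ)) volume 0 (2*Real.pi) :=
      ((cB.clm_apply contE).clm_apply contE).intervalIntegrable _ _
    have hintL : IntervalIntegrable
        (fun θ => B (c r θ) 1 1 + B (c r θ) Complex.I Complex.I) volume 0 (2*Real.pi) :=
      (((cB.clm_apply continuous_const).clm_apply continuous_const).add
        ((cB.clm_apply continuous_const).clm_apply continuous_const)).intervalIntegrable _ _
    have hg2eq : g₂ r = (∫ θ in (0:ℝ)..(2*Real.pi),
          (B (c r θ) 1 1 + B (c r θ) Complex.I Complex.I)) - (1/(r*r)) * (r * g₁ r) := by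
      rw [hg2_def]
      simp only []
      rw [intervalIntegral.integral_congr (g := fun θ =>
        (B (c r θ) 1 1 + B (c r θ) Complex.I Complex.I)
          - (1/(r*r)) * B (c r θ) (Complex.I * c r θ) (Complex.I * c r θ))
        (fun θ _ => htr θ)]
      rw [intervalIntegral.integral_sub hintL (hi1.const_mul _),
        intervalIntegral.integral_const_mul, hq]
    rw [hg2eq]
    field_simp
    ring
  -- positivity of the Laplacian integral
  have hLpos : ∀ r : ℝ, 0 < r → r < 1 →
      0 ≤ ∫ θ in (0:ℝ)..(2*Real.pi), (B (c r θ) 1 1 + B (c r θ) Complex.I Complex.I) := by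
    intro r h0 h1'
    have hr : |r| < 1 := by rw [_root_.abs_of_pos h0]; exact h1'
    apply intervalIntegral.integral_nonneg twoπ
    intro θ _
    have hla := hlap (c r θ) (hc_mem hr θ)
    rw [hlap_eq _ (hc_mem hr θ)] at hla
    exact hla
  set hfun : ℝ → ℝ := fun r => r * g₁ r with hh_def
  have hh_deriv : ∀ r : ℝ, |r| < 1 → HasDerivAt hfun (g₁ r + r * g₂ r) r := by
    intro r hr
    have hd := (hasDerivAt_id r).fun_mul (claimB r hr)
    simpa [hh_def] using hd
  have hmono_h : MonotoneOn hfun (Set.Ico 0 1) := by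
    apply monotoneOn_of_deriv_nonneg (convex_Ico 0 1)
    · intro x hx
      have hx1 : |x| < 1 := by rw [Set.mem_Ico] at hx; rw [_root_.abs_of_nonneg hx.1]; exact hx.2
      exact (hh_deriv x hx1).continuousAt.continuousWithinAt
    · rw [interior_Ico]
      intro x hx
      have hx1 : |x| < 1 := by rw [Set.mem_Ioo] at hx; rw [_root_.abs_of_pos hx.1]; exact hx.2
      exact (hh_deriv x hx1).differentiableAt.differentiableWithinAt
    · rw [interior_Ico]
      intro x hx
      rw [Set.mem_Ioo] at hx
      have hx1 : |x| < 1 := by rw [_root_.abs_of_pos hx.1]; exact hx.2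
      rw [(hh_deriv x hx1).deriv, keyIneq x hx.1 hx.2]
      exact mul_nonneg hx.1.le (hLpos x hx.1 hx.2)
  have hg1_nonneg : ∀ r ∈ Set.Ioo (0:ℝ) 1, 0 ≤ g₁ r := by
    intro r hr
    rw [Set.mem_Ioo] at hr
    have h0 : hfun 0 = 0 := by simp [hh_def]
    have hmm := hmono_h (Set.mem_Ico.2 ⟨le_refl 0, one_pos⟩)
      (Set.mem_Ico.2 ⟨hr.1.le, hr.2⟩) hr.1.le
    rw [h0] at hmm
    by_contra hcon
    push_neg at hcon
    have : hfun r < 0 := by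
      have := mul_pos hr.1 (neg_pos.mpr hcon)
      simp only [hh_def]
      nlinarith
    linarith
  have hfinal : MonotoneOn g (Set.Ioo 0 1) := by
    apply monotoneOn_of_deriv_nonneg (convex_Ioo 0 1)
    · intro x hx
      rw [Set.mem_Ioo] at hx
      have hx1 : |x| < 1 := by rw [_root_.abs_of_pos hx.1]; exact hx.2
      exact (claimA x hx1).continuousAt.continuousWithinAt
    · rw [interior_Ioo]
      intro x hx
      rw [Set.mem_Ioo] at hx
      have hx1 : |x| < 1 := by rw [_root_.abs_of_pos hx.1]; exact hx.2
      exact (claimA x hx1).differentiableAt.differentiableWithinAt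
    · rw [interior_Ioo]
      intro x hx
      have hx' := hx
      rw [Set.mem_Ioo] at hx'
      have hx1 : |x| < 1 := by rw [_root_.abs_of_pos hx'.1]; exact hx'.2
      rw [(claimA x hx1).deriv]
      exact hg1_nonneg x hx
  have hgid : (fun r : ℝ =>
      ∫ θ in (0:ℝ)..(2 * Real.pi), u ((r : ℂ) * Complex.exp (θ * Complex.I))) = g := by
    funext r
    rw [hg_def]
    congr 1
    funext θ
    rw [hc_eq]
  rw [hgid]
  exact hfinal

section Helpers

variable {F' : Type*} [NormedAddCommGroup F'] [NormedSpace ℝ F']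
variable {G' : Type*} [NormedAddCommGroup G'] [NormedSpace ℝ G']

/-- Differentiability of a directional derivative of a C² function. -/
private lemma diff_dir {a : ℂ → F'} {s : Set ℂ} (hs : IsOpen s) {z : ℂ} (hz : z ∈ s)
    (ha : ContDiffOn ℝ 2 a s) (e : ℂ) :
    DifferentiableAt ℝ (fun w => fderiv ℝ a w e) z := by
  have h1 : ContDiffOn ℝ 1 (fderiv ℝ a) s := ha.fderiv_of_isOpen hs (by norm_num)
  have h2 : DifferentiableAt ℝ (fderiv ℝ a) z :=
    (h1.contDiffAt (hs.mem_nhds hz)).differentiableAt one_ne_zero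
  exact (ContinuousLinearMap.apply ℝ F' e).differentiableAt.comp z h2

/-- The Laplacian commutes with postcomposition by a continuous linear map. -/
private lemma lap_clm_comp (T : F' →L[ℝ] G') {f : ℂ → F'} {s : Set ℂ} (hs : IsOpen s)
    {z : ℂ} (hz : z ∈ s) (hf : ContDiffOn ℝ 2 f s) :
    lap (fun w => T (f w)) z = T (lap f z) := by
  have hfd : ∀ w ∈ s, DifferentiableAt ℝ f w := fun w hw =>
    (hf.contDiffAt (hs.mem_nhds hw)).differentiableAt two_ne_zero
  have h1 : ∀ e : ℂ, (fun w => fderiv ℝ (fun x => T (f x)) w e)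
      =ᶠ[nhds z] (fun w => T (fderiv ℝ f w e)) := by
    intro e
    filter_upwards [hs.mem_nhds hz] with w hw
    rw [show (fun x => T (f x)) = (⇑T ∘ f) from rfl,
      (T.hasFDerivAt.comp w (hfd w hw).hasFDerivAt).fderiv]
    rfl
  have h2 : ∀ e d : ℂ, fderiv ℝ (fun w => fderiv ℝ (fun x => T (f x)) w e) z d
      = T (fderiv ℝ (fun w => fderiv ℝ f w e) z d) := by
    intro e d
    rw [(h1 e).fderiv_eq]
    rw [show (fun w => T (fderiv ℝ f w e)) = (⇑T ∘ fun w => fderiv ℝ f w e) from rfl,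
      (T.hasFDerivAt.comp z (diff_dir hs hz hf e).hasFDerivAt).fderiv]
    rfl
  simp only [lap, h2, ← map_add]

/-- The Laplacian is additive on C² functions. -/
private lemma lap_add {a b : ℂ → ℝ} {s : Set ℂ} (hs : IsOpen s) {z : ℂ} (hz : z ∈ s)
    (ha : ContDiffOn ℝ 2 a s) (hb : ContDiffOn ℝ 2 b s) :
    lap (fun w => a w + b w) z = lap a z + lap b z := by
  have had : ∀ w ∈ s, DifferentiableAt ℝ a w := fun w hw =>
    (ha.contDiffAt (hs.mem_nhds hw)).differentiableAt two_ne_zero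
  have hbd : ∀ w ∈ s, DifferentiableAt ℝ b w := fun w hw =>
    (hb.contDiffAt (hs.mem_nhds hw)).differentiableAt two_ne_zero
  have h1 : ∀ e : ℂ, (fun w => fderiv ℝ (fun x => a x + b x) w e)
      =ᶠ[nhds z] (fun w => fderiv ℝ a w e + fderiv ℝ b w e) := by
    intro e
    filter_upwards [hs.mem_nhds hz] with w hw
    rw [fderiv_fun_add (had w hw) (hbd w hw)]
    rfl
  have h2 : ∀ e d : ℂ, fderiv ℝ (fun w => fderiv ℝ (fun x => a x + b x) w e) z d
      = fderiv ℝ (fun w => fderiv ℝ a w e) z d + fderiv ℝ (fun w => fderiv ℝ b w e) z d := by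
    intro e d
    rw [(h1 e).fderiv_eq, fderiv_fun_add (diff_dir hs hz ha e) (diff_dir hs hz hb e)]
    rfl
  simp only [lap, h2]
  ring

private lemma lap_add_const (g : ℂ → ℝ) (k : ℝ) : lap (fun w => g w + k) = lap g := by
  funext z
  have : ∀ e : ℂ, (fun w => fderiv ℝ (fun x => g x + k) w e) = fun w => fderiv ℝ g w e := by
    intro e; funext w; rw [fderiv_add_const]
  simp only [lap, this]

/-- Second-order chain rule for a scalar outer function, in Laplacian form. -/
private lemma lap_scalar_comp {v : ℂ → ℝ} {s : Set ℂ} (hs : IsOpen s) {z : ℂ} (hz : z ∈ s)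
    (hv : ContDiffOn ℝ 2 v s) (φ φ' φ'' : ℝ → ℝ)
    (hφ : ∀ w ∈ s, HasDerivAt φ (φ' (v w)) (v w))
    (hφ' : HasDerivAt φ' (φ'' (v z)) (v z)) :
    lap (fun w => φ (v w)) z
      = φ'' (v z) * ((fderiv ℝ v z 1)^2 + (fderiv ℝ v z Complex.I)^2)
        + φ' (v z) * lap v z := by
  have hvd : ∀ w ∈ s, DifferentiableAt ℝ v w := fun w hw =>
    (hv.contDiffAt (hs.mem_nhds hw)).differentiableAt two_ne_zero
  have h1 : ∀ e : ℂ, (fun w => fderiv ℝ (fun x => φ (v x)) w e)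
      =ᶠ[nhds z] (fun w => φ' (v w) * fderiv ℝ v w e) := by
    intro e
    filter_upwards [hs.mem_nhds hz] with w hw
    rw [show (fun x => φ (v x)) = (φ ∘ v) from rfl,
      ((hφ w hw).comp_hasFDerivAt w (hvd w hw).hasFDerivAt).fderiv]
    simp [ContinuousLinearMap.smul_apply, smul_eq_mul]
  have h2 : ∀ e d : ℂ, fderiv ℝ (fun w => fderiv ℝ (fun x => φ (v x)) w e) z d
      = φ' (v z) * fderiv ℝ (fun w => fderiv ℝ v w e) z d
        + fderiv ℝ v z e * (φ'' (v z) * fderiv ℝ v z d) := by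
    intro e d
    rw [(h1 e).fderiv_eq]
    have hout : HasFDerivAt (fun w => φ' (v w)) (φ'' (v z) • fderiv ℝ v z) z :=
      hφ'.comp_hasFDerivAt z (hvd z hz).hasFDerivAt
    have hin : HasFDerivAt (fun w => fderiv ℝ v w e)
        (fderiv ℝ (fun w => fderiv ℝ v w e) z) z :=
      (diff_dir hs hz hv e).hasFDerivAt
    rw [(hout.fun_mul hin).fderiv]
    simp only [ContinuousLinearMap.add_apply, ContinuousLinearMap.smul_apply, smul_eq_mul]
  simp only [lap, h2]
  ring

end Helpers

private lemma ueps_subharmonic (f : ℂ → ℂ)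
    (hf : ContDiffOn ℝ 2 f (ball (0:ℂ) 1))
    (hRe : ∀ z ∈ ball (0:ℂ) 1, 0 ≤ ((starRingEnd ℂ) (f z) * lap f z).re)
    {q ε : ℝ} (hq : 1 ≤ q) (hε : 0 < ε) :
    ContDiffOn ℝ 2 (fun z => (Complex.normSq (f z) + ε) ^ q) (ball (0:ℂ) 1) ∧
      ∀ z ∈ ball (0:ℂ) 1, 0 ≤ lap (fun z => (Complex.normSq (f z) + ε) ^ q) z := by
  have hball : IsOpen (ball (0:ℂ) 1) := isOpen_ball
  set a : ℂ → ℝ := fun w => Complex.reCLM (f w) with ha_def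
  set b : ℂ → ℝ := fun w => Complex.imCLM (f w) with hb_def
  have ha : ContDiffOn ℝ 2 a (ball 0 1) := Complex.reCLM.contDiff.comp_contDiffOn hf
  have hb : ContDiffOn ℝ 2 b (ball 0 1) := Complex.imCLM.contDiff.comp_contDiffOn hf
  set v : ℂ → ℝ := fun w => a w * a w + b w * b w + ε with hv_def
  have hveq : (fun z => (Complex.normSq (f z) + ε) ^ q) = (fun z => v z ^ q) := by
    funext w
    congr 1
  have hv : ContDiffOn ℝ 2 v (ball 0 1) := ((ha.mul ha).add (hb.mul hb)).add contDiffOn_const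
  have hvpos : ∀ w, 0 < v w := by
    intro w
    have h1 := mul_self_nonneg (a w)
    have h2 := mul_self_nonneg (b w)
    simp only [hv_def]
    nlinarith
  constructor
  · rw [hveq]
    intro z hz
    have h1 : ContDiffAt ℝ 2 (fun t : ℝ => t ^ q) (v z) :=
      Real.contDiffAt_rpow_const_of_ne (ne_of_gt (hvpos z))
    exact (h1.comp z (hv.contDiffAt (hball.mem_nhds hz))).contDiffWithinAt
  · intro z hz
    rw [hveq]
    -- Laplacian of v
    have hlap_a : lap a z = (lap f z).re := lap_clm_comp Complex.reCLM hball hz hf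
    have hlap_b : lap b z = (lap f z).im := lap_clm_comp Complex.imCLM hball hz hf
    have hsq : ∀ (g : ℂ → ℝ), ContDiffOn ℝ 2 g (ball 0 1) →
        lap (fun w => g w * g w) z
          = 2 * ((fderiv ℝ g z 1)^2 + (fderiv ℝ g z Complex.I)^2) + (g z + g z) * lap g z := by
      intro g hg
      have h := lap_scalar_comp hball hz hg (fun t => t * t) (fun t => t + t) (fun _ => 2)
        (fun w _ => by simpa using (hasDerivAt_id' (g w)).fun_mul (hasDerivAt_id' (g w)))
        (by
          have h2 := (hasDerivAt_id (g z)).add (hasDerivAt_id (g z))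
          norm_num at h2
          exact h2)
      simpa using h
    have hlap_v : lap v z
        = 2 * ((fderiv ℝ a z 1)^2 + (fderiv ℝ a z Complex.I)^2) + (a z + a z) * (lap f z).re
          + (2 * ((fderiv ℝ b z 1)^2 + (fderiv ℝ b z Complex.I)^2)
            + (b z + b z) * (lap f z).im) := by
      have h1 : lap v = lap (fun w => a w * a w + b w * b w) := lap_add_const _ ε
      rw [hv_def]
      rw [show (fun w => a w * a w + b w * b w + ε) = (fun w => (a w * a w + b w * b w) + ε)
        from rfl]
      rw [lap_add_const (fun w => a w * a w + b w * b w) ε]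
      rw [lap_add hball hz (ha.mul ha) (hb.mul hb), hsq a ha, hsq b hb, hlap_a, hlap_b]
    have hlapv_nonneg : 0 ≤ lap v z := by
      have hre := hRe z hz
      have hmulre : ((starRingEnd ℂ) (f z) * lap f z).re
          = a z * (lap f z).re + b z * (lap f z).im := by
        simp [Complex.mul_re, ha_def, hb_def]
      rw [hmulre] at hre
      rw [hlap_v]
      nlinarith [sq_nonneg (fderiv ℝ a z 1), sq_nonneg (fderiv ℝ a z Complex.I),
        sq_nonneg (fderiv ℝ b z 1), sq_nonneg (fderiv ℝ b z Complex.I)]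
    -- chain rule for the outer power
    have hout := lap_scalar_comp hball hz hv (fun t => t ^ q) (fun t => q * t ^ (q-1))
      (fun t => q * ((q-1) * t ^ (q-1-1)))
      (fun w _ => Real.hasDerivAt_rpow_const (Or.inl (ne_of_gt (hvpos w))))
      ((Real.hasDerivAt_rpow_const (Or.inl (ne_of_gt (hvpos z)))).const_mul q)
    rw [hout]
    have hp1 : (0:ℝ) ≤ q * ((q-1) * v z ^ (q-1-1)) :=
      mul_nonneg (by linarith) (mul_nonneg (by linarith)
        (Real.rpow_pos_of_pos (hvpos z) _).le)
    have hp2 : (0:ℝ) ≤ q * v z ^ (q-1) :=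
      mul_nonneg (by linarith) (Real.rpow_pos_of_pos (hvpos z) _).le
    have hp3 : (0:ℝ) ≤ (fderiv ℝ v z 1)^2 + (fderiv ℝ v z Complex.I)^2 := by positivity
    exact add_nonneg (mul_nonneg hp1 hp3) (mul_nonneg hp2 hlapv_nonneg)

/-- If f ∈ C²(𝔻) and Re(conj(f)·Δf) ≥ 0 on 𝔻, then for every
p ∈ [2,∞), r ↦ M_p^p(r,f) = (1/2π)∫₀^{2π}|f(re^{iθ})|^p dθ is increasing on (0,1). -/
theorem integral_means_monotone (f : ℂ → ℂ)
    (hf : ContDiffOn ℝ 2 f (ball (0:ℂ) 1))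
    (hRe : ∀ z ∈ ball (0:ℂ) 1, 0 ≤ ((starRingEnd ℂ) (f z) * lap f z).re)
    (p : ℝ) (hp : 2 ≤ p) :
    MonotoneOn (fun r : ℝ =>
      (1 / (2 * Real.pi)) *
        ∫ θ in (0:ℝ)..(2 * Real.pi), ‖f ((r : ℂ) * Complex.exp (θ * Complex.I))‖ ^ p)
      (Set.Ioo 0 1) := by
  have hπ : (0:ℝ) ≤ 1/(2*Real.pi) := by positivity
  have hq1 : 1 ≤ p/2 := by linarith
  have hq0 : 0 < p/2 := by linarith
  intro r₁ hr₁ r₂ hr₂ hle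
  have hmono : ∀ n : ℕ,
      (∫ θ in (0:ℝ)..(2*Real.pi),
        (Complex.normSq (f ((r₁:ℂ) * Complex.exp (θ * Complex.I))) + 1/(n+1:ℝ)) ^ (p/2))
      ≤ ∫ θ in (0:ℝ)..(2*Real.pi),
        (Complex.normSq (f ((r₂:ℂ) * Complex.exp (θ * Complex.I))) + 1/(n+1:ℝ)) ^ (p/2) := by
    intro n
    have hεn : (0:ℝ) < 1/(n+1:ℝ) := by positivity
    obtain ⟨hC2, hsub⟩ := ueps_subharmonic f hf hRe hq1 hεn
    exact mono_core _ hC2 hsub hr₁ hr₂ hle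
  have hlim : ∀ r ∈ Set.Ioo (0:ℝ) 1,
      Filter.Tendsto (fun n : ℕ => ∫ θ in (0:ℝ)..(2*Real.pi),
        (Complex.normSq (f ((r:ℂ) * Complex.exp (θ * Complex.I))) + 1/(n+1:ℝ)) ^ (p/2))
        Filter.atTop
        (nhds (∫ θ in (0:ℝ)..(2*Real.pi), ‖f ((r:ℂ) * Complex.exp (θ * Complex.I))‖ ^ p)) := by
    intro r hr
    rw [Set.mem_Ioo] at hr
    have hrabs : ∀ θ : ℝ, (r:ℂ) * Complex.exp (θ * Complex.I) ∈ ball (0:ℂ) 1 := by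
      intro θ
      simp only [mem_ball, dist_zero_right, norm_mul, Complex.norm_real]
      rw [show ‖Complex.exp (θ * Complex.I)‖ = 1 from Complex.norm_exp_ofReal_mul_I θ]
      rw [Real.norm_eq_abs, _root_.abs_of_pos hr.1, mul_one]
      exact hr.2
    have hcr : Continuous fun θ : ℝ => (r:ℂ) * Complex.exp (θ * Complex.I) := by
      apply continuous_const.mul
      exact Complex.continuous_exp.comp (by continuity)
    have hN : Continuous fun θ : ℝ => Complex.normSq (f ((r:ℂ) * Complex.exp (θ * Complex.I))) :=
      Complex.continuous_normSq.comp (hf.continuousOn.comp_continuous hcr hrabs)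
    apply intervalIntegral.tendsto_integral_filter_of_dominated_convergence
      (bound := fun θ => (Complex.normSq (f ((r:ℂ) * Complex.exp (θ * Complex.I))) + 1) ^ (p/2))
    · refine Filter.Eventually.of_forall fun n => ?_
      exact ((hN.add continuous_const).rpow_const (fun θ => Or.inr hq0.le)).aestronglyMeasurable
    · refine Filter.Eventually.of_forall fun n => ae_of_all _ fun θ _ => ?_
      have hnn : (0:ℝ) ≤ (Complex.normSq (f ((r:ℂ) * Complex.exp (θ * Complex.I)))
          + 1/(n+1:ℝ)) ^ (p/2) :=
        Real.rpow_nonneg (add_nonneg (Complex.normSq_nonneg _) (by positivity)) _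
      rw [Real.norm_of_nonneg hnn]
      apply Real.rpow_le_rpow (add_nonneg (Complex.normSq_nonneg _) (by positivity)) _ hq0.le
      have : (1:ℝ)/(n+1:ℝ) ≤ 1 := by
        rw [div_le_one (by positivity)]
        have : (0:ℝ) ≤ (n:ℝ) := Nat.cast_nonneg n
        linarith
      linarith [this]
    · exact ((hN.add continuous_const).rpow_const
        (fun θ => Or.inr hq0.le)).intervalIntegrable _ _
    · refine ae_of_all _ fun θ _ => ?_
      have h1 : Filter.Tendsto (fun n : ℕ =>
          Complex.normSq (f ((r:ℂ) * Complex.exp (θ * Complex.I))) + 1/(n+1:ℝ))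
          Filter.atTop
          (nhds (Complex.normSq (f ((r:ℂ) * Complex.exp (θ * Complex.I))) + 0)) :=
        tendsto_const_nhds.add tendsto_one_div_add_atTop_nhds_zero_nat
      rw [add_zero] at h1
      have h2 : ContinuousAt (fun x : ℝ => x ^ (p/2))
          (Complex.normSq (f ((r:ℂ) * Complex.exp (θ * Complex.I)))) :=
        Real.continuousAt_rpow_const _ _ (Or.inr hq0.le)
      have h3 := h2.tendsto.comp h1
      have h4 : (Complex.normSq (f ((r:ℂ) * Complex.exp (θ * Complex.I)))) ^ (p/2)
          = ‖f ((r:ℂ) * Complex.exp (θ * Complex.I))‖ ^ p := by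
        rw [Complex.normSq_eq_norm_sq]
        rw [← Real.rpow_natCast ‖f ((r:ℂ) * Complex.exp (θ * Complex.I))‖ 2,
          ← Real.rpow_mul (norm_nonneg _)]
        norm_num
        rw [show (2:ℝ) * (p/2) = p from by ring]
      rw [h4] at h3
      exact h3
  exact mul_le_mul_of_nonneg_left
    (le_of_tendsto_of_tendsto' (hlim r₁ hr₁) (hlim r₂ hr₂) hmono) hπ
end

section
/- Let 0 ≤ s < 1, s ≤ α < s+1, and ω be a majorant. Let f ∈ C¹(𝔻) satisfy ‖D_f(z)‖ ≤ C/ω((1-|z|)^α) for all z ∈ 𝔻 and some constant C > 0. Then there is a constant C₁ > 0 (one may take C₁ = C·B(1-s, 1+s-α), B the Beta function) such that for all distinct z, w ∈ 𝔻: |f(z) − f(w)| ≤ C₁ |z−w| / ω((1-|z|)^s (1-|w|)^{α-s}). -/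
open Complex Metric MeasureTheory

set_option maxHeartbeats 1000000

/-- Wirtinger derivative f_z = (f_x - i f_y)/2. -/
noncomputable def wd (f : ℂ → ℂ) (z : ℂ) : ℂ :=
  (fderiv ℝ f z 1 - Complex.I * fderiv ℝ f z Complex.I) / 2

/-- Wirtinger derivative f_z̄ = (f_x + i f_y)/2. -/
noncomputable def wdb (f : ℂ → ℂ) (z : ℂ) : ℂ :=
  (fderiv ℝ f z 1 + Complex.I * fderiv ℝ f z Complex.I) / 2

/-- ‖D_f(z)‖ = |f_z(z)| + |f_z̄(z)|. -/
noncomputable def Dnorm (f : ℂ → ℂ) (z : ℂ) : ℝ := ‖wd f z‖ + ‖wdb f z‖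

lemma clm_decomp (L : ℂ →L[ℝ] ℂ) (v : ℂ) :
    L v = (L 1 - Complex.I * L Complex.I) / 2 * v
        + (L 1 + Complex.I * L Complex.I) / 2 * (starRingEnd ℂ v) := by
  have hv : v = v.re • (1:ℂ) + v.im • Complex.I := by
    simp [Complex.real_smul, Complex.re_add_im]
  rw [hv, map_add, _root_.map_smul, _root_.map_smul]
  simp only [map_add, _root_.map_smul, Complex.real_smul, smul_eq_mul, mul_one,
    Complex.conj_ofReal, map_mul, Complex.conj_I]
  linear_combination ((v.im : ℂ) * (L Complex.I)) * Complex.I_sq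

lemma fderiv_apply_bound (f : ℂ → ℂ) (p v : ℂ) :
    ‖fderiv ℝ f p v‖ ≤ Dnorm f p * ‖v‖ := by
  have h := clm_decomp (fderiv ℝ f p) v
  rw [show ((fderiv ℝ f p) 1 - Complex.I * (fderiv ℝ f p) Complex.I) / 2 = wd f p from rfl,
    show ((fderiv ℝ f p) 1 + Complex.I * (fderiv ℝ f p) Complex.I) / 2 = wdb f p from rfl] at h
  calc ‖fderiv ℝ f p v‖ = ‖wd f p * v + wdb f p * (starRingEnd ℂ v)‖ := by rw [h]
    _ ≤ ‖wd f p * v‖ + ‖wdb f p * (starRingEnd ℂ v)‖ := norm_add_le _ _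
    _ = Dnorm f p * ‖v‖ := by
        rw [norm_mul, norm_mul, RCLike.norm_conj, Dnorm]; ring

/-- Let 0 ≤ s < 1, s ≤ α < s+1, ω a majorant, f ∈ C¹(𝔻) with
‖D_f(z)‖ ≤ C/ω((1-|z|)^α). Then there is C₁ > 0 such that for all distinct
z, w ∈ 𝔻: |f(z)-f(w)| ≤ C₁|z-w|/ω((1-|z|)^s (1-|w|)^{α-s}). -/
theorem bloch_implies_lipschitz (s α : ℝ) (hs0 : 0 ≤ s) (hs1 : s < 1)
    (hsα : s ≤ α) (hα : α < s + 1)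
    (ω : ℝ → ℝ)
    (hcont : ContinuousOn ω (Set.Ici 0))
    (hmono : MonotoneOn ω (Set.Ici 0))
    (h0 : ω 0 = 0)
    (hdec : ∀ u t : ℝ, 0 < u → u ≤ t → ω t / t ≤ ω u / u)
    (f : ℂ → ℂ) (hf : ContDiffOn ℝ 1 f (ball (0:ℂ) 1))
    (C : ℝ) (hC : 0 < C)
    (hbd : ∀ z ∈ ball (0:ℂ) 1, Dnorm f z ≤ C / ω ((1 - ‖z‖) ^ α)) :
    ∃ C₁ : ℝ, 0 < C₁ ∧ ∀ z ∈ ball (0:ℂ) 1, ∀ w ∈ ball (0:ℂ) 1, z ≠ w →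
      ‖f z - f w‖ ≤ C₁ * ‖z - w‖ / ω ((1 - ‖z‖) ^ s * (1 - ‖w‖) ^ (α - s)) := by
  have h1s : (0:ℝ) < 1 - s := by linarith
  have h1sα : (0:ℝ) < 1 + s - α := by linarith
  set M : ℝ := 2 ^ (α - s) / (1 - s) + 2 ^ s / (1 + s - α) with hMdef
  have hMpos : 0 < M := by positivity
  refine ⟨C * M, by positivity, ?_⟩
  intro z hz w hw _
  have hz1 : ‖z‖ < 1 := by simpa [mem_ball_zero_iff] using hz
  have hw1 : ‖w‖ < 1 := by simpa [mem_ball_zero_iff] using hw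
  have hdz : (0:ℝ) < 1 - ‖z‖ := by linarith
  have hdw : (0:ℝ) < 1 - ‖w‖ := by linarith
  have hωnn : ∀ u : ℝ, 0 ≤ u → 0 ≤ ω u := by
    intro u hu
    simpa [h0] using hmono (Set.self_mem_Ici) hu hu
  set K : ℝ := (1 - ‖z‖) ^ s * (1 - ‖w‖) ^ (α - s) with hKdef
  have hKpos : 0 < K := by
    exact mul_pos (Real.rpow_pos_of_pos hdz s) (Real.rpow_pos_of_pos hdw (α - s))
  have hdiff : ∀ x ∈ ball (0:ℂ) 1, DifferentiableAt ℝ f x := fun x hx =>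
    (hf.differentiableOn one_ne_zero).differentiableAt (isOpen_ball.mem_nhds hx)
  by_cases hωpos : ∀ u : ℝ, 0 < u → 0 < ω u
  · -- main case
    have hωK : 0 < ω K := hωpos K hKpos
    set χ : ℝ → ℂ := fun t => w + t • (z - w) with hχdef
    have hχeq : ∀ t : ℝ, χ t = (1 - t) • w + t • z := by
      intro t
      simp only [hχdef, Complex.real_smul]
      push_cast
      ring
    have hχ0 : χ 0 = w := by simp [hχdef]
    have hχ1 : χ 1 = z := by simp [hχdef]
    have hχnorm : ∀ t ∈ Set.Icc (0:ℝ) 1, ‖χ t‖ ≤ (1 - t) * ‖w‖ + t * ‖z‖ := by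
      intro t ht
      rw [hχeq t]
      refine (norm_add_le _ _).trans ?_
      rw [norm_smul, norm_smul, Real.norm_eq_abs, Real.norm_eq_abs,
        _root_.abs_of_nonneg (by linarith [ht.2] : (0:ℝ) ≤ 1 - t), _root_.abs_of_nonneg ht.1]
    have hχmem : ∀ t ∈ Set.Icc (0:ℝ) 1, χ t ∈ ball (0:ℂ) 1 := by
      intro t ht
      rw [mem_ball_zero_iff]
      have h1 := hχnorm t ht
      rcases eq_or_lt_of_le ht.1 with h | h
      · rw [← h] at h1 ⊢; nlinarith
      · nlinarith [ht.2, norm_nonneg w, norm_nonneg z]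
    have hd1 : ∀ t ∈ Set.Icc (0:ℝ) 1, t * (1 - ‖z‖) ≤ 1 - ‖χ t‖ := by
      intro t ht
      have h1 := hχnorm t ht
      nlinarith [ht.1, ht.2, norm_nonneg w]
    have hd2 : ∀ t ∈ Set.Icc (0:ℝ) 1, (1 - t) * (1 - ‖w‖) ≤ 1 - ‖χ t‖ := by
      intro t ht
      have h1 := hχnorm t ht
      nlinarith [ht.1, ht.2, norm_nonneg z]
    -- derivative of f ∘ χ
    have hderiv : ∀ t ∈ Set.uIcc (0:ℝ) 1,
        HasDerivAt (fun u => f (χ u)) ((fderiv ℝ f (χ t)) (z - w)) t := by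
      intro t ht
      rw [Set.uIcc_of_le zero_le_one] at ht
      have hχd : HasDerivAt χ (z - w) t := by
        exact (HasDerivAt.const_add w ((hasDerivAt_id t).smul_const (z - w))).congr_deriv (one_smul ℝ _)
      exact ((hdiff (χ t) (hχmem t ht)).hasFDerivAt).comp_hasDerivAt t hχd
    -- integrability of the derivative
    have hχcont : Continuous χ := by fun_prop
    have hfc : ContinuousOn (fderiv ℝ f) (ball (0:ℂ) 1) :=
      hf.continuousOn_fderiv_of_isOpen isOpen_ball le_rfl
    have hg'cont : ContinuousOn (fun t => (fderiv ℝ f (χ t)) (z - w)) (Set.Icc (0:ℝ) 1) := by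
      exact (hfc.comp hχcont.continuousOn hχmem).clm_apply continuousOn_const
    have hg'int : IntervalIntegrable (fun t => (fderiv ℝ f (χ t)) (z - w)) volume 0 1 := by
      apply ContinuousOn.intervalIntegrable
      rwa [Set.uIcc_of_le zero_le_one]
    have hFTC : ∫ t in (0:ℝ)..1, (fderiv ℝ f (χ t)) (z - w) = f z - f w := by
      rw [intervalIntegral.integral_eq_sub_of_hasDerivAt hderiv hg'int, hχ0, hχ1]
    -- the dominating function
    set c0 : ℝ := C * ‖z - w‖ / ω K with hc0def
    have hc0 : 0 ≤ c0 := by positivity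
    set G : ℝ → ℝ := fun t => c0 * (2 ^ (α - s) * t ^ (-s) + 2 ^ s * (1 - t) ^ (s - α))
      with hGdef
    have hint1 : IntervalIntegrable (fun t : ℝ => t ^ (-s)) volume 0 1 :=
      intervalIntegral.intervalIntegrable_rpow' (by linarith)
    have hint2 : IntervalIntegrable (fun t : ℝ => (1 - t) ^ (s - α)) volume 0 1 := by
      have := (intervalIntegral.intervalIntegrable_rpow'
        (show (-1:ℝ) < s - α by linarith) (a := 0) (b := 1)).comp_sub_left 1
      simpa using this.symm
    have hGint : IntervalIntegrable G volume 0 1 := by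
      exact ((hint1.const_mul _).add (hint2.const_mul _)).const_mul _
    -- pointwise bound a.e.
    have hae : ∀ᵐ t ∂volume.restrict (Set.uIoc (0:ℝ) 1),
        ‖(fderiv ℝ f (χ t)) (z - w)‖ ≤ G t := by
      have h1ne : ∀ᵐ (t : ℝ) ∂volume, t ≠ 1 := by
        rw [MeasureTheory.ae_iff]
        convert Real.volume_singleton (a := 1) using 2
        ext x; simp
      filter_upwards [MeasureTheory.ae_restrict_mem measurableSet_uIoc,
        MeasureTheory.ae_restrict_of_ae h1ne] with t ht ht1
      rw [Set.uIoc_of_le zero_le_one] at ht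
      have ht0 : 0 < t := ht.1
      have ht1' : t < 1 := lt_of_le_of_ne ht.2 ht1
      have htmem : t ∈ Set.Icc (0:ℝ) 1 := ⟨le_of_lt ht0, ht.2⟩
      set p := χ t with hp
      have hpball := hχmem t htmem
      set ν : ℝ := t ^ s * (1 - t) ^ (α - s) with hνdef
      have hνpos : 0 < ν :=
        mul_pos (Real.rpow_pos_of_pos ht0 s) (Real.rpow_pos_of_pos (by linarith) (α - s))
      have hν1 : ν ≤ 1 := by
        have := Real.rpow_le_one (le_of_lt ht0) (le_of_lt ht1') hs0
        have := Real.rpow_le_one (by linarith : (0:ℝ) ≤ 1 - t) (by linarith) (by linarith : 0 ≤ α - s)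
        nlinarith [Real.rpow_pos_of_pos ht0 s]
      -- ω ((1 - ‖p‖)^α) ≥ ν * ω K
      have hdp : 0 < 1 - ‖p‖ := by
        rw [mem_ball_zero_iff] at hpball; linarith
      have hsplit : (1 - ‖p‖) ^ α = (1 - ‖p‖) ^ s * (1 - ‖p‖) ^ (α - s) := by
        rw [← Real.rpow_add hdp]; ring_nf
      have hge : ν * K ≤ (1 - ‖p‖) ^ α := by
        rw [hsplit]
        have e1 : (t * (1 - ‖z‖)) ^ s ≤ (1 - ‖p‖) ^ s :=
          Real.rpow_le_rpow (by positivity) (hd1 t htmem) hs0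
        have e2 : ((1 - t) * (1 - ‖w‖)) ^ (α - s) ≤ (1 - ‖p‖) ^ (α - s) :=
          Real.rpow_le_rpow (mul_nonneg (by linarith) (le_of_lt hdw)) (hd2 t htmem) (by linarith)
        have e3 : (t * (1 - ‖z‖)) ^ s = t ^ s * (1 - ‖z‖) ^ s :=
          Real.mul_rpow (le_of_lt ht0) (le_of_lt hdz)
        have e4 : ((1 - t) * (1 - ‖w‖)) ^ (α - s) = (1 - t) ^ (α - s) * (1 - ‖w‖) ^ (α - s) :=
          Real.mul_rpow (by linarith) (le_of_lt hdw)
        have e5 : ν * K = (t * (1 - ‖z‖)) ^ s * ((1 - t) * (1 - ‖w‖)) ^ (α - s) := by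
          rw [e3, e4, hνdef, hKdef]; ring
        rw [e5]
        exact mul_le_mul e1 e2 (Real.rpow_nonneg (mul_nonneg (by linarith) (le_of_lt hdw)) _)
          (Real.rpow_nonneg (le_of_lt hdp) _)
      have hων : ν * ω K ≤ ω ((1 - ‖p‖) ^ α) := by
        have hm : ω (ν * K) ≤ ω ((1 - ‖p‖) ^ α) :=
          hmono (Set.mem_Ici.mpr (le_of_lt (mul_pos hνpos hKpos)))
            (Set.mem_Ici.mpr (Real.rpow_nonneg (le_of_lt hdp) _)) hge
        have hd := hdec (ν * K) K (mul_pos hνpos hKpos) (by nlinarith)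
        have : ν * ω K ≤ ω (ν * K) := by
          rw [div_le_div_iff₀ hKpos (mul_pos hνpos hKpos)] at hd
          nlinarith
        linarith
      have hωppos : 0 < ω ((1 - ‖p‖) ^ α) := hωpos _ (Real.rpow_pos_of_pos hdp α)
      -- chain
      have hb1 : ‖(fderiv ℝ f p) (z - w)‖ ≤ Dnorm f p * ‖z - w‖ := fderiv_apply_bound f p _
      have hb2 : Dnorm f p ≤ C / ω ((1 - ‖p‖) ^ α) := hbd p hpball
      have hb3 : C / ω ((1 - ‖p‖) ^ α) ≤ C / (ν * ω K) :=
        div_le_div_of_nonneg_left (le_of_lt hC) (mul_pos hνpos hωK) hων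
      have hb4 : ν⁻¹ ≤ 2 ^ (α - s) * t ^ (-s) + 2 ^ s * (1 - t) ^ (s - α) := by
        have hνinv : ν⁻¹ = t ^ (-s) * (1 - t) ^ (s - α) := by
          rw [hνdef, mul_inv, ← Real.rpow_neg (le_of_lt ht0),
            ← Real.rpow_neg (by linarith : (0:ℝ) ≤ 1 - t)]
          ring_nf
        rw [hνinv]
        rcases le_total t (1/2) with hhalf | hhalf
        · have : (1 - t) ^ (s - α) ≤ (1/2 : ℝ) ^ (s - α) :=
            Real.rpow_le_rpow_of_nonpos (by norm_num) (by linarith) (by linarith)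
          have h2 : ((1:ℝ)/2) ^ (s - α) = 2 ^ (α - s) := by
            rw [show (1:ℝ)/2 = 2⁻¹ by norm_num, Real.inv_rpow (by norm_num),
              ← Real.rpow_neg (by norm_num)]
            ring_nf
          have hts : 0 ≤ t ^ (-s) := le_of_lt (Real.rpow_pos_of_pos ht0 _)
          nlinarith [Real.rpow_pos_of_pos (show (0:ℝ) < 2 by norm_num) s,
            Real.rpow_pos_of_pos (show (0:ℝ) < 1 - t by linarith) (s - α)]
        · have : t ^ (-s) ≤ (1/2 : ℝ) ^ (-s) :=
            Real.rpow_le_rpow_of_nonpos (by norm_num) (by linarith) (by linarith)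
          have h2 : ((1:ℝ)/2) ^ (-s) = 2 ^ s := by
            rw [show (1:ℝ)/2 = 2⁻¹ by norm_num, Real.inv_rpow (by norm_num),
              ← Real.rpow_neg (by norm_num)]
            ring_nf
          have hts : 0 ≤ (1 - t) ^ (s - α) := le_of_lt (Real.rpow_pos_of_pos (by linarith) _)
          nlinarith [Real.rpow_pos_of_pos (show (0:ℝ) < 2 by norm_num) (α - s),
            Real.rpow_pos_of_pos ht0 (-s)]
      calc ‖(fderiv ℝ f p) (z - w)‖ ≤ Dnorm f p * ‖z - w‖ := hb1
        _ ≤ (C / (ν * ω K)) * ‖z - w‖ :=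
            mul_le_mul_of_nonneg_right (hb2.trans hb3) (norm_nonneg _)
        _ = c0 * ν⁻¹ := by
            have hν0 : ν ≠ 0 := ne_of_gt hνpos
            have hωK0 : (ω K) ≠ 0 := ne_of_gt hωK
            rw [hc0def]; ring
        _ ≤ G t := by
            rw [hGdef]
            exact mul_le_mul_of_nonneg_left hb4 hc0
    -- integral of G
    have hGval : ∫ t in (0:ℝ)..1, G t = c0 * M := by
      rw [hGdef]
      rw [intervalIntegral.integral_const_mul]
      rw [intervalIntegral.integral_add (hint1.const_mul _) (hint2.const_mul _),
        intervalIntegral.integral_const_mul, intervalIntegral.integral_const_mul]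
      have i1 : ∫ t in (0:ℝ)..1, t ^ (-s) = 1 / (1 - s) := by
        rw [integral_rpow (Or.inl (by linarith))]
        rw [Real.one_rpow, Real.zero_rpow (by linarith : -s + 1 ≠ 0)]
        norm_num
        ring_nf
      have i2 : ∫ t in (0:ℝ)..1, (1 - t) ^ (s - α) = 1 / (1 + s - α) := by
        rw [show (fun t : ℝ => (1 - t) ^ (s - α)) = fun t : ℝ => ((fun u : ℝ => u ^ (s - α)) (1 - t)) from rfl]
        rw [intervalIntegral.integral_comp_sub_left (fun u : ℝ => u ^ (s - α)) 1]
        norm_num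
        rw [integral_rpow (Or.inl (by linarith))]
        rw [Real.one_rpow, Real.zero_rpow (by linarith : s - α + 1 ≠ 0)]
        ring_nf
      rw [i1, i2, hMdef]
      ring
    -- conclude
    have hfinal : ‖f z - f w‖ ≤ c0 * M := by
      rw [← hFTC]
      refine (intervalIntegral.norm_integral_le_of_norm_le zero_le_one
        (by rw [← MeasureTheory.ae_restrict_iff' measurableSet_Ioc, ← Set.uIoc_of_le zero_le_one]; exact hae) hGint).trans ?_
      rw [hGval]
    rw [hc0def] at hfinal
    calc ‖f z - f w‖ ≤ C * ‖z - w‖ / ω K * M := hfinal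
      _ = C * M * ‖z - w‖ / ω K := by ring
  · -- degenerate case: ω vanishes somewhere on (0,∞), hence everywhere
    push_neg at hωpos
    obtain ⟨u, hu, hωu⟩ := hωpos
    have hωu0 : ω u = 0 := le_antisymm hωu (hωnn u (le_of_lt hu))
    have hzero : ∀ v : ℝ, 0 ≤ v → ω v = 0 := by
      intro v hv
      rcases le_total v u with h | h
      · have := hmono (Set.mem_Ici.mpr hv) (Set.mem_Ici.mpr (le_of_lt hu)) h
        have := hωnn v hv
        linarith
      · have hvpos : 0 < v := lt_of_lt_of_le hu h
        have := hdec u v hu h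
        rw [hωu0] at this
        have h1 : ω v / v ≤ 0 := by simpa using this
        have h2 : 0 ≤ ω v := hωnn v (le_of_lt hvpos)
        have := div_nonneg h2 (le_of_lt hvpos)
        have : ω v / v = 0 := le_antisymm h1 this
        field_simp at this
        simpa using this
    -- f has zero derivative on the ball
    have hfd0 : ∀ x ∈ ball (0:ℂ) 1, fderiv ℝ f x = 0 := by
      intro x hx
      have hx1 : ‖x‖ < 1 := by simpa [mem_ball_zero_iff] using hx
      have hb := hbd x hx
      rw [hzero ((1 - ‖x‖) ^ α) (Real.rpow_nonneg (by linarith) α), div_zero] at hb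
      have h1 : wd f x = 0 := by
        have := norm_nonneg (wd f x)
        have := norm_nonneg (wdb f x)
        rw [Dnorm] at hb
        have : ‖wd f x‖ = 0 := by linarith
        simpa using this
      have h2 : wdb f x = 0 := by
        have := norm_nonneg (wd f x)
        have := norm_nonneg (wdb f x)
        rw [Dnorm] at hb
        have : ‖wdb f x‖ = 0 := by linarith
        simpa using this
      ext v
      rw [clm_decomp (fderiv ℝ f x) v]
      rw [show ((fderiv ℝ f x) 1 - Complex.I * (fderiv ℝ f x) Complex.I) / 2 = wd f x from rfl,
        show ((fderiv ℝ f x) 1 + Complex.I * (fderiv ℝ f x) Complex.I) / 2 = wdb f x from rfl,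
        h1, h2]
      simp
    have hconst : ‖f z - f w‖ ≤ 0 * ‖z - w‖ := by
      refine (convex_ball (0:ℂ) 1).norm_image_sub_le_of_norm_fderiv_le hdiff ?_ hw hz
      intro x hx
      rw [hfd0 x hx]
      simp
    rw [hzero K (le_of_lt hKpos), div_zero]
    simpa using hconst
end

section
/- Let f be a harmonic mapping on the unit disk 𝔻 and 1 ≤ α < 2 and ω a majorant with ω(t) > 0 for t > 0. Suppose there is a constant C₂ > 0 such that for all z ∈ 𝔻 and r ∈ (0, 1-|z|], the mean oscillation satisfies (1/|𝔻(z,r)|)∫_{𝔻(z,r)} |f(ζ) − f_{𝔻(z,r)}| dA(ζ) ≤ C₂ r / ω(r^α), where f_{𝔻(z,r)} is the average of f over 𝔻(z,r). Then ‖D_f(z)‖ ≤ 12 C₂ / ω((1-|z|)^α) for all z ∈ 𝔻. -/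
open Complex Metric MeasureTheory

/-- A harmonic mapping on an open set: C² with vanishing Laplacian. -/
def HarmonicMappingOn (f : ℂ → ℂ) (U : Set ℂ) : Prop :=
  ContDiffOn ℝ 2 f U ∧ ∀ z ∈ U, lap f z = 0

lemma fderiv_repr (f : ℂ → ℂ) (z ζ : ℂ) :
    fderiv ℝ f z ζ = wd f z * ζ + wdb f z * (starRingEnd ℂ) ζ := by
  obtain ⟨x, y⟩ := ζ
  have h : (⟨x, y⟩ : ℂ) = x • (1:ℂ) + y • Complex.I := by
    apply Complex.ext <;> simp
  have h2 : (starRingEnd ℂ) (⟨x, y⟩ : ℂ) = (x : ℂ) - (y : ℂ) * Complex.I := by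
    apply Complex.ext <;> simp
  have h3 : ((⟨x, y⟩ : ℂ) : ℂ) = (x : ℂ) + (y : ℂ) * Complex.I := by
    apply Complex.ext <;> simp
  rw [h2]
  conv_lhs => rw [h, (fderiv ℝ f z).map_add, (fderiv ℝ f z).map_smul,
    (fderiv ℝ f z).map_smul]
  conv_rhs => rw [h3]
  simp only [wd, wdb, Complex.real_smul]
  linear_combination ((y:ℂ) * fderiv ℝ f z Complex.I) * Complex.I_sq

lemma diffAt_of_clinear {g : ℂ → ℂ} {L : ℂ →L[ℝ] ℂ} {z : ℂ}
    (h : HasFDerivAt g L z) (hlin : L Complex.I = Complex.I * L 1) :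
    DifferentiableAt ℂ g z := by
  set M : ℂ →L[ℂ] ℂ := (L 1) • (ContinuousLinearMap.id ℂ ℂ) with hM
  have hLM : M.restrictScalars ℝ = L := by
    apply ContinuousLinearMap.ext
    intro ζ
    have hζ : ζ = ζ.re • (1:ℂ) + ζ.im • Complex.I := by
      apply Complex.ext <;> simp
    rw [ContinuousLinearMap.coe_restrictScalars']
    have hMζ : M ζ = L 1 * ζ := by simp [hM]
    rw [hMζ]
    conv_rhs => rw [hζ, L.map_add, L.map_smul, L.map_smul]
    conv_lhs => rw [hζ]
    simp only [smul_eq_mul, Complex.real_smul, hlin]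
    push_cast
    ring
  exact (hasFDerivAt_of_restrictScalars ℝ h hLM).differentiableAt

lemma wd_diffAt {f : ℂ → ℂ} (hf2 : ContDiffOn ℝ 2 f (ball (0:ℂ) 1))
    (hlap : ∀ z ∈ ball (0:ℂ) 1, lap f z = 0)
    {z : ℂ} (hz : z ∈ ball (0:ℂ) 1) :
    DifferentiableAt ℂ (wd f) z := by
  have hO : IsOpen (ball (0:ℂ) 1) := isOpen_ball
  have hmem : ball (0:ℂ) 1 ∈ nhds z := hO.mem_nhds hz
  have hfd : ContDiffOn ℝ 1 (fderiv ℝ f) (ball (0:ℂ) 1) :=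
    hf2.fderiv_of_isOpen hO (by norm_num)
  have hdfz : DifferentiableAt ℝ (fderiv ℝ f) z :=
    (hfd.differentiableOn one_ne_zero).differentiableAt hmem
  set Φ := fderiv ℝ (fderiv ℝ f) z with hΦdef
  have hΦ : HasFDerivAt (fderiv ℝ f) Φ z := hdfz.hasFDerivAt
  have hev : ∀ᶠ y in nhds z, HasFDerivAt f (fderiv ℝ f y) y := by
    filter_upwards [hmem] with y hy
    exact ((hf2.differentiableOn two_ne_zero).differentiableAt (hO.mem_nhds hy)).hasFDerivAt
  have hsymm : Φ 1 Complex.I = Φ Complex.I 1 :=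
    second_derivative_symmetric_of_eventually hev hΦ 1 Complex.I
  have hA : HasFDerivAt (fun w => fderiv ℝ f w 1)
      ((ContinuousLinearMap.apply ℝ ℂ (1:ℂ)).comp Φ) z :=
    (ContinuousLinearMap.apply ℝ ℂ (1:ℂ)).hasFDerivAt.comp z hΦ
  have hB : HasFDerivAt (fun w => fderiv ℝ f w Complex.I)
      ((ContinuousLinearMap.apply ℝ ℂ Complex.I).comp Φ) z :=
    (ContinuousLinearMap.apply ℝ ℂ Complex.I).hasFDerivAt.comp z hΦ
  have hlapz : Φ 1 1 + Φ Complex.I Complex.I = 0 := by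
    have h := hlap z hz
    unfold lap at h
    rw [hA.fderiv, hB.fderiv] at h
    simpa using h
  have hL := (hA.sub (hB.const_mul Complex.I)).const_mul ((2:ℂ)⁻¹)
  have hL' : HasFDerivAt (wd f)
      ((2:ℂ)⁻¹ • (((ContinuousLinearMap.apply ℝ ℂ (1:ℂ)).comp Φ) -
        Complex.I • ((ContinuousLinearMap.apply ℝ ℂ Complex.I).comp Φ))) z := by
    have hfun : wd f = fun y => (2:ℂ)⁻¹ * (fderiv ℝ f y 1 - Complex.I * fderiv ℝ f y Complex.I) := by
      funext y; unfold wd; ring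
    rw [hfun]; exact hL
  apply diffAt_of_clinear hL'
  simp only [ContinuousLinearMap.smul_apply, ContinuousLinearMap.sub_apply,
    ContinuousLinearMap.coe_comp', Function.comp_apply, ContinuousLinearMap.apply_apply,
    smul_eq_mul]
  linear_combination (-(2:ℂ)⁻¹) * hsymm + (2:ℂ)⁻¹ * (Φ 1 Complex.I) * Complex.I_sq
    - (2:ℂ)⁻¹ * Complex.I * hlapz

lemma fderiv_conj_comp (f : ℂ → ℂ) (z : ℂ) :
    fderiv ℝ (fun w => (starRingEnd ℂ) (f w)) z =
      (((Complex.conjCLE : ℂ ≃L[ℝ] ℂ)) : ℂ →L[ℝ] ℂ).comp (fderiv ℝ f z) := by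
  have : (fun w => (starRingEnd ℂ) (f w)) = (⇑Complex.conjCLE) ∘ f := by
    funext w; simp [Complex.conjCLE_apply]
  rw [this, Complex.conjCLE.comp_fderiv]

lemma wd_conj_eq (f : ℂ → ℂ) (z : ℂ) :
    wd (fun w => (starRingEnd ℂ) (f w)) z = (starRingEnd ℂ) (wdb f z) := by
  unfold wd wdb
  rw [fderiv_conj_comp]
  simp only [ContinuousLinearMap.coe_comp', Function.comp_apply,
    ContinuousLinearEquiv.coe_coe, Complex.conjCLE_apply]
  rw [map_div₀, map_add]
  simp [map_mul, Complex.conj_I, map_ofNat]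
  ring

open intervalIntegral in
lemma circle_avg {H : ℂ → ℂ} (hH : DifferentiableOn ℂ H (ball (0:ℂ) 1)) {c : ℂ} {ρ : ℝ}
    (hρ : 0 < ρ) (hsub : closedBall c ρ ⊆ ball (0:ℂ) 1) :
    ∫ θ in (0:ℝ)..(2*Real.pi), H (c + ρ * Complex.exp (θ * Complex.I))
      = (2*Real.pi : ℝ) • H c := by
  have hd : DifferentiableOn ℂ H (closedBall c ρ) := hH.mono hsub
  have key := hd.circleIntegral_sub_inv_smul (mem_ball_self hρ)
  rw [circleIntegral] at key
  have hcongr : ∀ θ : ℝ, deriv (circleMap c ρ) θ •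
      ((circleMap c ρ θ - c)⁻¹ • H (circleMap c ρ θ))
      = Complex.I * H (c + ρ * Complex.exp (θ * Complex.I)) := by
    intro θ
    have hne : (ρ : ℂ) * Complex.exp (θ * Complex.I) ≠ 0 :=
      mul_ne_zero (by exact_mod_cast hρ.ne') (Complex.exp_ne_zero _)
    simp only [deriv_circleMap, circleMap, smul_eq_mul, zero_add, add_sub_cancel_left]
    field_simp
    ring_nf
    rw [mul_comm, ← mul_assoc, inv_mul_cancel₀ (by exact_mod_cast hρ.ne'), one_mul]
  rw [intervalIntegral.integral_congr (fun θ _ => hcongr θ),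
    intervalIntegral.integral_const_mul] at key
  have : Complex.I * ∫ θ in (0:ℝ)..(2*Real.pi), H (c + ρ * Complex.exp (θ * Complex.I))
      = Complex.I * ((2*Real.pi : ℝ) • H c) := by
    rw [key]; simp [smul_eq_mul, Complex.real_smul]; ring
  exact mul_left_cancel₀ Complex.I_ne_zero this

open intervalIntegral in
lemma circle_zero {H : ℂ → ℂ} (hH : DifferentiableOn ℂ H (ball (0:ℂ) 1)) {c : ℂ} {ρ : ℝ}
    (hρ : 0 < ρ) (hsub : closedBall c ρ ⊆ ball (0:ℂ) 1) :
    ∫ θ in (0:ℝ)..(2*Real.pi),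
      Complex.exp (θ * Complex.I) ^ 2 * H (c + ρ * Complex.exp (θ * Complex.I)) = 0 := by
  have hball : ball c ρ ⊆ ball (0:ℂ) 1 := ball_subset_closedBall.trans hsub
  have key : (∮ z in C(c, ρ), (z - c) * H z) = 0 := by
    apply Complex.circleIntegral_eq_zero_of_differentiable_on_off_countable hρ.le
      Set.countable_empty
    · apply ContinuousOn.mul (by fun_prop)
      exact (hH.continuousOn).mono hsub
    · intro z hz
      have hz' : z ∈ ball (0:ℂ) 1 := hball hz.1
      exact (differentiableAt_id.sub_const c).mul
        (hH.differentiableAt (isOpen_ball.mem_nhds hz'))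
  rw [circleIntegral] at key
  have hcongr : ∀ θ : ℝ, deriv (circleMap c ρ) θ •
      ((circleMap c ρ θ - c) * H (circleMap c ρ θ))
      = (Complex.I * ρ^2) * (Complex.exp (θ * Complex.I) ^ 2 *
          H (c + ρ * Complex.exp (θ * Complex.I))) := by
    intro θ
    simp only [deriv_circleMap, circleMap, smul_eq_mul, zero_add, add_sub_cancel_left]
    ring
  rw [intervalIntegral.integral_congr (fun θ _ => hcongr θ),
    intervalIntegral.integral_const_mul] at key
  have hne : (Complex.I * (ρ:ℂ)^2) ≠ 0 :=
    mul_ne_zero Complex.I_ne_zero (pow_ne_zero _ (by exact_mod_cast hρ.ne'))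
  exact (mul_eq_zero.mp key).resolve_left hne


lemma lap_conj_comp (f : ℂ → ℂ) (z : ℂ) :
    lap (fun w => (starRingEnd ℂ) (f w)) z = (starRingEnd ℂ) (lap f z) := by
  unfold lap
  have h1 : (fun w => fderiv ℝ (fun w' => (starRingEnd ℂ) (f w')) w (1:ℂ))
      = fun w => (starRingEnd ℂ) (fderiv ℝ f w 1) := by
    funext w; rw [fderiv_conj_comp]; simp [Complex.conjCLE_apply]
  have h2 : (fun w => fderiv ℝ (fun w' => (starRingEnd ℂ) (f w')) w Complex.I)
      = fun w => (starRingEnd ℂ) (fderiv ℝ f w Complex.I) := by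
    funext w; rw [fderiv_conj_comp]; simp [Complex.conjCLE_apply]
  rw [h1, h2, fderiv_conj_comp, fderiv_conj_comp]
  simp [Complex.conjCLE_apply, map_add]

lemma harmonic_conj {f : ℂ → ℂ} (hf : HarmonicMappingOn f (ball (0:ℂ) 1)) :
    HarmonicMappingOn (fun w => (starRingEnd ℂ) (f w)) (ball (0:ℂ) 1) := by
  constructor
  · have : (fun w => (starRingEnd ℂ) (f w)) = (⇑(Complex.conjCLE : ℂ ≃L[ℝ] ℂ)) ∘ f := by
      funext w; simp [Complex.conjCLE_apply]
    rw [this]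
    exact ((Complex.conjCLE : ℂ ≃L[ℝ] ℂ) : ℂ →L[ℝ] ℂ).contDiff.comp_contDiffOn hf.1
  · intro z hz
    rw [lap_conj_comp, hf.2 z hz, map_zero]

lemma harmonic_sub_const {f : ℂ → ℂ} (hf : HarmonicMappingOn f (ball (0:ℂ) 1)) (c : ℂ) :
    HarmonicMappingOn (fun w => f w - c) (ball (0:ℂ) 1) := by
  constructor
  · exact hf.1.sub contDiffOn_const
  · intro z hz
    have h1 : (fun w => fderiv ℝ (fun w' => f w' - c) w (1:ℂ)) = fun w => fderiv ℝ f w 1 := by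
      funext w; rw [fderiv_sub_const]
    have h2 : (fun w => fderiv ℝ (fun w' => f w' - c) w Complex.I)
        = fun w => fderiv ℝ f w Complex.I := by
      funext w; rw [fderiv_sub_const]
    have := hf.2 z hz
    unfold lap at this ⊢
    rw [h1, h2]
    exact this

lemma wd_sub_const (f : ℂ → ℂ) (c : ℂ) (z : ℂ) : wd (fun w => f w - c) z = wd f z := by
  unfold wd; rw [fderiv_sub_const]

lemma wdb_sub_const (f : ℂ → ℂ) (c : ℂ) (z : ℂ) : wdb (fun w => f w - c) z = wdb f z := by
  unfold wdb; rw [fderiv_sub_const]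

lemma wdb_eq_conj (f : ℂ → ℂ) (z : ℂ) :
    wdb f z = (starRingEnd ℂ) (wd (fun w => (starRingEnd ℂ) (f w)) z) := by
  rw [wd_conj_eq]; simp

lemma integral_exp_neg_I : ∫ θ in (0:ℝ)..(2*Real.pi), Complex.exp (-(θ * Complex.I)) = 0 := by
  have h : ∀ θ : ℝ, Complex.exp (-(θ * Complex.I)) = Complex.exp ((-Complex.I) * θ) := by
    intro θ; ring_nf
  rw [intervalIntegral.integral_congr (fun θ _ => h θ)]
  rw [integral_exp_mul_complex (by simp [Complex.I_ne_zero])]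
  have : Complex.exp (-Complex.I * (2 * Real.pi)) = 1 := by
    rw [show (-Complex.I * (2 * (Real.pi:ℂ))) = -(2 * Real.pi * Complex.I) by push_cast; ring,
      Complex.exp_neg, Complex.exp_two_pi_mul_I, inv_one]
  push_cast
  rw [this]
  simp

lemma segment_repr {g : ℂ → ℂ} (hg : ContDiffOn ℝ 2 g (ball (0:ℂ) 1)) {a ζ : ℂ}
    (h : ∀ t ∈ Set.Icc (0:ℝ) 1, a + t • ζ ∈ ball (0:ℂ) 1) :
    g (a + ζ) - g a = ∫ t in (0:ℝ)..1, fderiv ℝ g (a + t • ζ) ζ := by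
  have hder : ∀ t ∈ Set.Icc (0:ℝ) 1,
      HasDerivAt (fun s : ℝ => g (a + s • ζ)) (fderiv ℝ g (a + t • ζ) ζ) t := by
    intro t ht
    have hγ : HasDerivAt (fun s : ℝ => a + s • ζ) ζ t := by
      simpa using ((hasDerivAt_id t).smul_const ζ).const_add a
    have hdg : DifferentiableAt ℝ g (a + t • ζ) :=
      (hg.differentiableOn two_ne_zero).differentiableAt (isOpen_ball.mem_nhds (h t ht))
    exact hdg.hasFDerivAt.comp_hasDerivAt t hγ
  have hcont : ContinuousOn (fun t : ℝ => fderiv ℝ g (a + t • ζ) ζ) (Set.Icc 0 1) := by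
    have hmap : Set.MapsTo (fun t : ℝ => a + t • ζ) (Set.Icc 0 1) (ball (0:ℂ) 1) :=
      fun t ht => h t ht
    have hc1 : ContinuousOn (fun t : ℝ => a + t • ζ) (Set.Icc 0 1) := by fun_prop
    exact ((hg.continuousOn_fderiv_of_isOpen isOpen_ball (by norm_num)).comp hc1
      hmap).clm_apply continuousOn_const
  have hint : IntervalIntegrable (fun t : ℝ => fderiv ℝ g (a + t • ζ) ζ)
      MeasureTheory.volume 0 1 := by
    apply ContinuousOn.intervalIntegrable
    rwa [Set.uIcc_of_le zero_le_one]
  have := intervalIntegral.integral_eq_sub_of_hasDerivAt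
    (fun t ht => hder t (by rwa [Set.uIcc_of_le zero_le_one] at ht)) hint
  rw [this]
  simp

open intervalIntegral in
lemma circle_key {g : ℂ → ℂ} (hg : HarmonicMappingOn g (ball (0:ℂ) 1)) {a : ℂ} {ρ : ℝ}
    (hρ : 0 < ρ) (hsub : closedBall a ρ ⊆ ball (0:ℂ) 1) :
    ∫ θ in (0:ℝ)..(2*Real.pi),
        Complex.exp (-(θ * Complex.I)) * g (a + ρ * Complex.exp (θ * Complex.I))
      = (2 * Real.pi * ρ : ℝ) • wd g a := by
  have hF : DifferentiableOn ℂ (wd g) (ball (0:ℂ) 1) :=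
    fun z hz => (wd_diffAt hg.1 hg.2 hz).differentiableWithinAt
  have hgc := harmonic_conj hg
  have hG : DifferentiableOn ℂ (wd (fun w => (starRingEnd ℂ) (g w))) (ball (0:ℂ) 1) :=
    fun z hz => (wd_diffAt hgc.1 hgc.2 hz).differentiableWithinAt
  set E : ℝ → ℂ := fun θ => Complex.exp (θ * Complex.I) with hEdef
  have hnormE : ∀ θ : ℝ, ‖E θ‖ = 1 := fun θ => by
    simp [hEdef, Complex.norm_exp_ofReal_mul_I]
  have hptmem : ∀ (θ τ : ℝ), 0 ≤ τ → τ ≤ ρ → a + (τ:ℂ) * E θ ∈ ball (0:ℂ) 1 := by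
    intro θ τ h0 h1
    apply hsub
    simp only [mem_closedBall, dist_eq_norm, add_sub_cancel_left, norm_mul, hnormE,
      Complex.norm_real, mul_one, Real.norm_eq_abs, _root_.abs_of_nonneg h0]
    exact h1
  have hmem : ∀ (θ t : ℝ), t ∈ Set.Icc (0:ℝ) 1 → a + t • ((ρ:ℂ) * E θ) ∈ ball (0:ℂ) 1 := by
    intro θ t ht
    have : t • ((ρ:ℂ) * E θ) = ((t*ρ : ℝ) : ℂ) * E θ := by
      rw [Complex.real_smul]; push_cast; ring
    rw [this]
    exact hptmem θ (t*ρ) (mul_nonneg ht.1 hρ.le)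
      (by nlinarith [ht.1, ht.2, hρ.le])
  -- the path integrand decomposition
  have hA : ∀ θ : ℝ, Complex.exp (-(θ*Complex.I)) * g (a + ρ * E θ)
      = Complex.exp (-(θ*Complex.I)) * g a
        + ∫ t in (0:ℝ)..1,
            Complex.exp (-(θ*Complex.I)) * fderiv ℝ g (a + t • ((ρ:ℂ) * E θ)) ((ρ:ℂ) * E θ) := by
    intro θ
    have hseg := segment_repr hg.1 (a := a) (ζ := (ρ:ℂ) * E θ) (fun t ht => hmem θ t ht)
    have hpull : (∫ t in (0:ℝ)..1,
        Complex.exp (-(θ*Complex.I)) * fderiv ℝ g (a + t • ((ρ:ℂ) * E θ)) ((ρ:ℂ) * E θ))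
        = Complex.exp (-(θ*Complex.I)) * (g (a + (ρ:ℂ) * E θ) - g a) := by
      rw [intervalIntegral.integral_const_mul, ← hseg]
    rw [hpull]
    ring
  rw [intervalIntegral.integral_congr (fun θ _ => hA θ)]
  have hgcont : Continuous fun θ : ℝ => g (a + ρ * E θ) := by
    apply hg.1.continuousOn.comp_continuous (by fun_prop)
    intro θ
    exact hptmem θ ρ hρ.le le_rfl
  have hecont : Continuous fun θ : ℝ => Complex.exp (-(θ*Complex.I)) := by fun_prop
  have h1 : IntervalIntegrable (fun θ : ℝ => Complex.exp (-(θ*Complex.I)) * g a)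
      MeasureTheory.volume 0 (2*Real.pi) := (hecont.mul continuous_const).intervalIntegrable _ _
  have h2 : IntervalIntegrable (fun θ : ℝ => ∫ t in (0:ℝ)..1,
      Complex.exp (-(θ*Complex.I)) * fderiv ℝ g (a + t • ((ρ:ℂ) * E θ)) ((ρ:ℂ) * E θ))
      MeasureTheory.volume 0 (2*Real.pi) := by
    apply IntervalIntegrable.congr_ae ((hecont.mul hgcont).intervalIntegrable _ _ |>.sub h1)
    filter_upwards with θ
    simp only [Pi.mul_apply]
    rw [hA θ]
    ring
  rw [intervalIntegral.integral_add h1 h2, intervalIntegral.integral_mul_const,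
    integral_exp_neg_I, zero_mul, zero_add]
  -- Fubini
  have h2pi : (0:ℝ) ≤ 2*Real.pi := by positivity
  rw [intervalIntegral.integral_of_le h2pi]
  simp_rw [intervalIntegral.integral_of_le (zero_le_one (α := ℝ))]
  have hQcont : ContinuousOn (fun p : ℝ × ℝ =>
      Complex.exp (-(p.1*Complex.I)) * fderiv ℝ g (a + p.2 • ((ρ:ℂ) * E p.1)) ((ρ:ℂ) * E p.1))
      (Set.Icc 0 (2*Real.pi) ×ˢ Set.Icc (0:ℝ) 1) := by
    have hu : Continuous fun p : ℝ × ℝ => a + p.2 • ((ρ:ℂ) * E p.1) := by fun_prop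
    have hmap : Set.MapsTo (fun p : ℝ × ℝ => a + p.2 • ((ρ:ℂ) * E p.1))
        (Set.Icc 0 (2*Real.pi) ×ˢ Set.Icc (0:ℝ) 1) (ball (0:ℂ) 1) :=
      fun p hp => hmem p.1 p.2 hp.2
    have hd : ContinuousOn (fun p : ℝ × ℝ => fderiv ℝ g (a + p.2 • ((ρ:ℂ) * E p.1)))
        (Set.Icc 0 (2*Real.pi) ×ˢ Set.Icc (0:ℝ) 1) :=
      (hg.1.continuousOn_fderiv_of_isOpen isOpen_ball (by norm_num)).comp
        hu.continuousOn hmap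
    have he2 : Continuous fun p : ℝ × ℝ => Complex.exp (-(p.1*Complex.I)) := by fun_prop
    have hv : Continuous fun p : ℝ × ℝ => (ρ:ℂ) * E p.1 := by fun_prop
    exact he2.continuousOn.mul (hd.clm_apply hv.continuousOn)
  have hQint : MeasureTheory.Integrable
      (Function.uncurry fun θ t : ℝ =>
        Complex.exp (-(θ*Complex.I)) * fderiv ℝ g (a + t • ((ρ:ℂ) * E θ)) ((ρ:ℂ) * E θ))
      ((MeasureTheory.volume.restrict (Set.Ioc 0 (2*Real.pi))).prod
        (MeasureTheory.volume.restrict (Set.Ioc (0:ℝ) 1))) := by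
    rw [MeasureTheory.Measure.prod_restrict, ← MeasureTheory.Measure.volume_eq_prod]
    apply MeasureTheory.IntegrableOn.mono_set
      (hQcont.integrableOn_compact (isCompact_Icc.prod isCompact_Icc))
    exact Set.prod_mono Set.Ioc_subset_Icc_self Set.Ioc_subset_Icc_self
  rw [MeasureTheory.integral_integral_swap hQint]
  -- inner circle integrals
  have hinner : ∀ t ∈ Set.Ioc (0:ℝ) 1,
      (∫ θ in Set.Ioc 0 (2*Real.pi),
        Complex.exp (-(θ*Complex.I)) * fderiv ℝ g (a + t • ((ρ:ℂ) * E θ)) ((ρ:ℂ) * E θ))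
      = (2 * Real.pi * ρ : ℝ) • wd g a := by
    intro t ht
    have hτ : 0 < t * ρ := mul_pos ht.1 hρ
    have hτρ : t * ρ ≤ ρ := by nlinarith [ht.2, hρ.le]
    have hsubτ : closedBall a (t*ρ) ⊆ ball (0:ℂ) 1 :=
      (closedBall_subset_closedBall hτρ).trans hsub
    have hu : ∀ θ : ℝ, a + t • ((ρ:ℂ) * E θ) = a + ((t*ρ : ℝ):ℂ) * E θ := by
      intro θ; rw [Complex.real_smul]; push_cast; ring
    have hconjE : ∀ θ : ℝ, (starRingEnd ℂ) (E θ) = Complex.exp (-(θ*Complex.I)) := by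
      intro θ
      rw [hEdef, ← Complex.exp_conj]
      congr 1
      simp [Complex.conj_I]
    have hEE : ∀ θ : ℝ, Complex.exp (-(θ*Complex.I)) * E θ = 1 := by
      intro θ
      rw [hEdef, ← Complex.exp_add]
      simp
    have hpt : ∀ θ : ℝ,
        Complex.exp (-(θ*Complex.I)) * fderiv ℝ g (a + t • ((ρ:ℂ) * E θ)) ((ρ:ℂ) * E θ)
        = (ρ:ℂ) * wd g (a + ((t*ρ:ℝ):ℂ) * E θ)
          + (ρ:ℂ) * (starRingEnd ℂ)
              (E θ ^ 2 * wd (fun w => (starRingEnd ℂ) (g w)) (a + ((t*ρ:ℝ):ℂ) * E θ)) := by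
      intro θ
      rw [hu θ, fderiv_repr, wdb_eq_conj]
      simp only [map_mul, map_pow, Complex.conj_ofReal, hconjE]
      linear_combination ((ρ:ℂ) * wd g (a + ((t*ρ:ℝ):ℂ) * E θ)) * hEE θ
    rw [MeasureTheory.setIntegral_congr_fun measurableSet_Ioc (fun θ _ => hpt θ)]
    rw [← intervalIntegral.integral_of_le h2pi]
    have hcF : Continuous fun θ : ℝ => (ρ:ℂ) * wd g (a + ((t*ρ:ℝ):ℂ) * E θ) := by
      apply continuous_const.mul
      apply (hF.continuousOn).comp_continuous (by fun_prop)
      intro θ; exact hptmem θ (t*ρ) hτ.le hτρ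
    have hcG : Continuous fun θ : ℝ => (ρ:ℂ) * (starRingEnd ℂ)
        (E θ ^ 2 * wd (fun w => (starRingEnd ℂ) (g w)) (a + ((t*ρ:ℝ):ℂ) * E θ)) := by
      apply continuous_const.mul
      apply Complex.continuous_conj.comp
      apply Continuous.mul (by fun_prop)
      apply (hG.continuousOn).comp_continuous (by fun_prop)
      intro θ; exact hptmem θ (t*ρ) hτ.le hτρ
    rw [intervalIntegral.integral_add (hcF.intervalIntegrable _ _) (hcG.intervalIntegrable _ _),
      intervalIntegral.integral_const_mul, intervalIntegral.integral_const_mul]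
    have havg := circle_avg hF hτ hsubτ
    have hzero := circle_zero hG hτ hsubτ
    have hconjint : (∫ θ in (0:ℝ)..(2*Real.pi), (starRingEnd ℂ)
        (E θ ^ 2 * wd (fun w => (starRingEnd ℂ) (g w)) (a + ((t*ρ:ℝ):ℂ) * E θ)))
        = (starRingEnd ℂ) (∫ θ in (0:ℝ)..(2*Real.pi),
            E θ ^ 2 * wd (fun w => (starRingEnd ℂ) (g w)) (a + ((t*ρ:ℝ):ℂ) * E θ)) := by
      rw [intervalIntegral.integral_of_le h2pi, intervalIntegral.integral_of_le h2pi]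
      exact integral_conj
    rw [hconjint]
    have hzero' : (∫ θ in (0:ℝ)..(2*Real.pi),
        E θ ^ 2 * wd (fun w => (starRingEnd ℂ) (g w)) (a + ((t*ρ:ℝ):ℂ) * E θ)) = 0 := hzero
    have havg' : (∫ θ in (0:ℝ)..(2*Real.pi), wd g (a + ((t*ρ:ℝ):ℂ) * E θ))
        = (2*Real.pi : ℝ) • wd g a := havg
    rw [hzero', havg', map_zero, mul_zero, add_zero, Complex.real_smul, Complex.real_smul]
    push_cast
    ring
  rw [MeasureTheory.setIntegral_congr_fun measurableSet_Ioc hinner]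
  simp

open intervalIntegral in
lemma disc_identity {g : ℂ → ℂ} (hg : HarmonicMappingOn g (ball (0:ℂ) 1)) {a : ℂ} {r : ℝ}
    (hr : 0 < r) (hsub : closedBall a r ⊆ ball (0:ℂ) 1) :
    ∫ w in ball a r, (starRingEnd ℂ) (w - a) * g w
      = ((Real.pi * r^4)/2 : ℝ) • wd g a := by
  have hππ : -Real.pi ≤ Real.pi := by linarith [Real.pi_pos]
  have hsymm_eq : ∀ p : ℝ × ℝ, Complex.polarCoord.symm p
      = (p.1 : ℂ) * Complex.exp (p.2 * Complex.I) := by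
    intro p
    rw [Complex.polarCoord_symm_apply, Complex.exp_mul_I]
    push_cast
    ring
  have hEabs : ∀ (x θ : ℝ), ‖(x:ℂ) * Complex.exp (θ * Complex.I)‖ = |x| := by
    intro x θ
    rw [norm_mul, Complex.norm_exp_ofReal_mul_I, Complex.norm_real, Real.norm_eq_abs, mul_one]
  -- Step 1: translation
  have htrans : (∫ w in ball a r, (starRingEnd ℂ) (w - a) * g w)
      = ∫ ζ in ball (0:ℂ) r, (starRingEnd ℂ) ζ * g (a + ζ) := by
    have hmp : MeasureTheory.MeasurePreserving (fun ζ : ℂ => a + ζ)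
        MeasureTheory.volume MeasureTheory.volume :=
      MeasureTheory.measurePreserving_add_left MeasureTheory.volume a
    have hemb : MeasurableEmbedding (fun ζ : ℂ => a + ζ) :=
      (MeasurableEquiv.addLeft a).measurableEmbedding
    have hpre : (fun ζ : ℂ => a + ζ) ⁻¹' (ball a r) = ball (0:ℂ) r := by
      ext ζ
      simp [mem_ball, dist_eq_norm, add_sub_cancel_left]
    rw [← hmp.setIntegral_preimage_emb hemb, hpre]
    simp [add_sub_cancel_left]
  rw [htrans]
  -- Step 2: polar coordinates
  set h : ℂ → ℂ := (ball (0:ℂ) r).indicator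
    (fun ζ => (starRingEnd ℂ) ζ * g (a + ζ)) with hhdef
  have hpolar := Complex.integral_comp_polarCoord_symm h
  have hrhs : (∫ z, h z) = ∫ ζ in ball (0:ℂ) r, (starRingEnd ℂ) ζ * g (a + ζ) :=
    MeasureTheory.integral_indicator measurableSet_ball
  rw [← hrhs, ← hpolar]
  have htarget : polarCoord.target = Set.Ioi (0:ℝ) ×ˢ Set.Ioo (-Real.pi) Real.pi := rfl
  have hfun : ∀ p ∈ polarCoord.target, p.1 • h (Complex.polarCoord.symm p)
      = (Set.Iio r ×ˢ (Set.univ : Set ℝ)).indicator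
          (fun p : ℝ × ℝ => p.1 • ((starRingEnd ℂ) (Complex.polarCoord.symm p)
            * g (a + Complex.polarCoord.symm p))) p := by
    intro p hp
    rw [htarget] at hp
    have hp1 : 0 < p.1 := hp.1
    by_cases hpr : p.1 < r
    · have hball : Complex.polarCoord.symm p ∈ ball (0:ℂ) r := by
        rw [mem_ball_zero_iff, hsymm_eq, hEabs, _root_.abs_of_pos hp1]
        exact hpr
      rw [hhdef, Set.indicator_of_mem hball,
        Set.indicator_of_mem (show p ∈ Set.Iio r ×ˢ (Set.univ : Set ℝ) from ⟨hpr, Set.mem_univ _⟩)]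
    · have hball : Complex.polarCoord.symm p ∉ ball (0:ℂ) r := by
        rw [mem_ball_zero_iff, hsymm_eq, hEabs, _root_.abs_of_pos hp1]
        exact not_lt.mpr (not_lt.mp hpr)
      have hmem' : p ∉ Set.Iio r ×ˢ (Set.univ : Set ℝ) := by
        simp [hpr]
      rw [hhdef, Set.indicator_of_notMem hball, Set.indicator_of_notMem hmem', smul_zero]
  rw [MeasureTheory.setIntegral_congr_fun polarCoord.open_target.measurableSet hfun,
    MeasureTheory.setIntegral_indicator (measurableSet_Iio.prod MeasurableSet.univ)]
  have hseteq : polarCoord.target ∩ (Set.Iio r ×ˢ (Set.univ : Set ℝ))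
      = Set.Ioo (0:ℝ) r ×ˢ Set.Ioo (-Real.pi) Real.pi := by
    rw [htarget, Set.prod_inter_prod, Set.inter_univ, Set.Ioi_inter_Iio]
  rw [hseteq]
  -- Step 3: iterated integral
  have hFcont : ContinuousOn (fun p : ℝ × ℝ => p.1 • ((starRingEnd ℂ) (Complex.polarCoord.symm p)
      * g (a + Complex.polarCoord.symm p))) (Set.Icc 0 r ×ˢ Set.Icc (-Real.pi) Real.pi) := by
    have hsc : Continuous fun p : ℝ × ℝ => Complex.polarCoord.symm p := by
      have : (fun p : ℝ × ℝ => Complex.polarCoord.symm p)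
          = fun p : ℝ × ℝ => (p.1 : ℂ) * Complex.exp (p.2 * Complex.I) := by
        funext p; exact hsymm_eq p
      rw [this]; fun_prop
    have hmapsTo : Set.MapsTo (fun p : ℝ × ℝ => a + Complex.polarCoord.symm p)
        (Set.Icc 0 r ×ˢ Set.Icc (-Real.pi) Real.pi) (ball (0:ℂ) 1) := by
      intro p hp
      apply hsub
      rw [mem_closedBall, dist_eq_norm, add_sub_cancel_left, hsymm_eq,
        hEabs, _root_.abs_of_nonneg hp.1.1]
      exact hp.1.2
    have hgc : ContinuousOn (fun p : ℝ × ℝ => g (a + Complex.polarCoord.symm p))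
        (Set.Icc 0 r ×ˢ Set.Icc (-Real.pi) Real.pi) :=
      hg.1.continuousOn.comp ((continuous_const.add hsc).continuousOn) hmapsTo
    apply (continuous_fst.continuousOn (s := Set.Icc 0 r ×ˢ Set.Icc (-Real.pi) Real.pi)).smul
    exact ((Complex.continuous_conj.comp hsc).continuousOn).mul hgc
  rw [MeasureTheory.Measure.volume_eq_prod, MeasureTheory.setIntegral_prod]
  swap
  · rw [← MeasureTheory.Measure.volume_eq_prod]
    apply MeasureTheory.IntegrableOn.mono_set
      (hFcont.integrableOn_compact (isCompact_Icc.prod isCompact_Icc))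
    exact Set.prod_mono Set.Ioo_subset_Icc_self Set.Ioo_subset_Icc_self
  -- Step 4: inner integral via circle_key
  have hinner : ∀ ρ ∈ Set.Ioo (0:ℝ) r,
      (∫ θ in Set.Ioo (-Real.pi) Real.pi, ρ •
        ((starRingEnd ℂ) (Complex.polarCoord.symm (ρ, θ))
          * g (a + Complex.polarCoord.symm (ρ, θ))))
      = (2 * Real.pi * ρ^3 : ℝ) • wd g a := by
    intro ρ hρ
    have hW : ∀ θ : ℝ, ρ • ((starRingEnd ℂ) (Complex.polarCoord.symm (ρ, θ))
        * g (a + Complex.polarCoord.symm (ρ, θ)))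
        = (ρ^2 : ℝ) • (Complex.exp (-(θ * Complex.I))
            * g (a + (ρ:ℂ) * Complex.exp (θ * Complex.I))) := by
      intro θ
      rw [hsymm_eq]
      have hconjE : (starRingEnd ℂ) ((ρ:ℝ) * Complex.exp (θ * Complex.I))
          = (ρ:ℂ) * Complex.exp (-(θ * Complex.I)) := by
        rw [map_mul, Complex.conj_ofReal, ← Complex.exp_conj]
        congr 2
        simp [Complex.conj_I]
      rw [hconjE, Complex.real_smul, Complex.real_smul]
      push_cast
      ring
    rw [MeasureTheory.setIntegral_congr_fun measurableSet_Ioo (fun θ _ => hW θ)]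
    have hper : Function.Periodic (fun θ : ℝ => (ρ^2 : ℝ) • (Complex.exp (-(θ * Complex.I))
        * g (a + (ρ:ℂ) * Complex.exp (θ * Complex.I)))) (2*Real.pi) := by
      intro θ
      have hE2 : Complex.exp (((θ + 2*Real.pi : ℝ) : ℂ) * Complex.I)
          = Complex.exp (θ * Complex.I) := by
        push_cast
        rw [add_mul, Complex.exp_add, Complex.exp_two_pi_mul_I, mul_one]
      have hE3 : Complex.exp (-(((θ + 2*Real.pi : ℝ) : ℂ) * Complex.I))
          = Complex.exp (-((θ:ℝ) * Complex.I)) := by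
        push_cast
        rw [show -(((θ:ℂ) + 2*Real.pi) * Complex.I)
            = -((θ:ℂ)*Complex.I) + -(2*(Real.pi:ℂ)*Complex.I) by ring,
          Complex.exp_add]
        simp [Complex.exp_neg, Complex.exp_two_pi_mul_I]
      simp only [hE2, hE3]
    have hIoo : (∫ θ in Set.Ioo (-Real.pi) Real.pi, (ρ^2 : ℝ) •
        (Complex.exp (-(θ * Complex.I)) * g (a + (ρ:ℂ) * Complex.exp (θ * Complex.I))))
        = ∫ θ in (-Real.pi)..Real.pi, (ρ^2 : ℝ) •
        (Complex.exp (-(θ * Complex.I)) * g (a + (ρ:ℂ) * Complex.exp (θ * Complex.I))) := by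
      rw [intervalIntegral.integral_of_le hππ, MeasureTheory.integral_Ioc_eq_integral_Ioo]
    rw [hIoo]
    have hshift : (∫ θ in (-Real.pi)..Real.pi, (ρ^2 : ℝ) •
        (Complex.exp (-(θ * Complex.I)) * g (a + (ρ:ℂ) * Complex.exp (θ * Complex.I))))
        = ∫ θ in (0:ℝ)..(2*Real.pi), (ρ^2 : ℝ) •
        (Complex.exp (-(θ * Complex.I)) * g (a + (ρ:ℂ) * Complex.exp (θ * Complex.I))) := by
      have h1 := hper.intervalIntegral_add_eq (-Real.pi) 0
      have e1 : -Real.pi + 2*Real.pi = Real.pi := by ring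
      have e2 : (0:ℝ) + 2*Real.pi = 2*Real.pi := by ring
      rw [e1, e2] at h1
      exact h1
    rw [hshift, intervalIntegral.integral_smul]
    have hsubρ : closedBall a ρ ⊆ ball (0:ℂ) 1 :=
      (closedBall_subset_closedBall hρ.2.le).trans hsub
    rw [circle_key hg hρ.1 hsubρ, smul_smul]
    congr 1
    ring
  rw [MeasureTheory.setIntegral_congr_fun measurableSet_Ioo hinner]
  rw [_root_.integral_smul_const]
  congr 1
  have : (∫ ρ in Set.Ioo (0:ℝ) r, (2 * Real.pi * ρ^3 : ℝ))
      = ∫ ρ in (0:ℝ)..r, 2 * Real.pi * ρ^3 := by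
    rw [intervalIntegral.integral_of_le hr.le, MeasureTheory.integral_Ioc_eq_integral_Ioo]
  rw [this, intervalIntegral.integral_const_mul, integral_pow]
  ring

lemma disc_identity' {g : ℂ → ℂ} (hg : HarmonicMappingOn g (ball (0:ℂ) 1)) {a : ℂ} {r : ℝ}
    (hr : 0 < r) (hsub : closedBall a r ⊆ ball (0:ℂ) 1) :
    ∫ w in ball a r, (w - a) * g w = ((Real.pi * r^4)/2 : ℝ) • wdb g a := by
  have h1 := disc_identity (harmonic_conj hg) hr hsub
  have h2 : (starRingEnd ℂ) (∫ w in ball a r,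
      (starRingEnd ℂ) (w - a) * (starRingEnd ℂ) (g w))
      = ∫ w in ball a r, (w - a) * g w := by
    rw [← integral_conj]
    congr 1
    funext w
    simp
  rw [h1] at h2
  rw [← h2, wdb_eq_conj]
  rw [Complex.real_smul, Complex.real_smul, map_mul, Complex.conj_ofReal]

/-- Let f be harmonic on 𝔻, 1 ≤ α < 2, ω a majorant with ω > 0 on
(0,∞).  If for all z ∈ 𝔻 and r ∈ (0,1-|z|] the mean oscillation of f over
𝔻(z,r) is at most C₂ r/ω(r^α), then ‖D_f(z)‖ ≤ 12 C₂/ω((1-|z|)^α) on 𝔻. -/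
theorem mean_oscillation_implies_bloch (α : ℝ) (hα1 : 1 ≤ α) (hα2 : α < 2)
    (ω : ℝ → ℝ)
    (hcont : ContinuousOn ω (Set.Ici 0))
    (hmono : MonotoneOn ω (Set.Ici 0))
    (h0 : ω 0 = 0)
    (hpos : ∀ t : ℝ, 0 < t → 0 < ω t)
    (hdec : ∀ u t : ℝ, 0 < u → u ≤ t → ω t / t ≤ ω u / u)
    (f : ℂ → ℂ) (hharm : HarmonicMappingOn f (ball (0:ℂ) 1))
    (C₂ : ℝ) (hC₂ : 0 < C₂)
    (hmo : ∀ z ∈ ball (0:ℂ) 1, ∀ r ∈ Set.Ioc (0:ℝ) (1 - ‖z‖),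
      (1 / (Real.pi * r ^ 2)) *
        ∫ ζ in ball z r,
          ‖f ζ - (Real.pi * r ^ 2)⁻¹ • ∫ ξ in ball z r, f ξ‖ ≤
        C₂ * r / ω (r ^ α)) :
    ∀ z ∈ ball (0:ℂ) 1, Dnorm f z ≤ 12 * C₂ / ω ((1 - ‖z‖) ^ α) := by
  intro a ha
  have ha1 : ‖a‖ < 1 := mem_ball_zero_iff.mp ha
  set R := 1 - ‖a‖ with hRdef
  have hRpos : 0 < R := by rw [hRdef]; linarith
  -- bound for each r < R
  have hkey : ∀ r ∈ Set.Ioo (0:ℝ) R, Dnorm f a ≤ 4 * C₂ / ω (r^α) := by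
    intro r hr
    have hrα : (0:ℝ) < r^α := Real.rpow_pos_of_pos hr.1 α
    set W := ω (r^α) with hWdef
    have hW : 0 < W := hpos _ hrα
    have hsub : closedBall a r ⊆ ball (0:ℂ) 1 := by
      intro w hw
      rw [mem_closedBall, dist_eq_norm] at hw
      rw [mem_ball_zero_iff]
      calc ‖w‖ = ‖(w - a) + a‖ := by ring_nf
        _ ≤ ‖w - a‖ + ‖a‖ := norm_add_le _ _
        _ ≤ r + ‖a‖ := by linarith
        _ < 1 := by have h2 : r < 1 - ‖a‖ := hRdef ▸ hr.2; linarith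
    have hmoa := hmo a ha r ⟨hr.1, by have h2 : r < 1 - ‖a‖ := hRdef ▸ hr.2; linarith⟩
    set c : ℂ := (Real.pi * r ^ 2)⁻¹ • ∫ ξ in ball a r, f ξ with hc
    set g : ℂ → ℂ := fun w => f w - c with hgdef
    have hg : HarmonicMappingOn g (ball (0:ℂ) 1) := harmonic_sub_const hharm c
    have hI1 := disc_identity hg hr.1 hsub
    have hI2 := disc_identity' hg hr.1 hsub
    have hπr : (0:ℝ) < Real.pi * r^2 := mul_pos Real.pi_pos (pow_pos hr.1 2)
    have hbound : (∫ w in ball a r, ‖f w - c‖) ≤ Real.pi * r^2 * (C₂ * r / W) := by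
      have h2 : (1 / (Real.pi * r ^ 2)) * ∫ w in ball a r, ‖f w - c‖ ≤ C₂ * r / W := hmoa
      calc (∫ w in ball a r, ‖f w - c‖)
          = (Real.pi * r^2) * ((1 / (Real.pi * r ^ 2)) * ∫ w in ball a r, ‖f w - c‖) := by
            field_simp
            rw [mul_div_assoc, div_self hr.1.ne', mul_one]
        _ ≤ (Real.pi * r^2) * (C₂ * r / W) := by
            exact mul_le_mul_of_nonneg_left h2 hπr.le
    -- integrability facts
    have hfc : ContinuousOn g (closedBall a r) :=
      ((hharm.1.continuousOn.mono hsub).sub continuousOn_const)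
    have hgnormint : MeasureTheory.IntegrableOn (fun w => ‖f w - c‖) (ball a r) := by
      apply MeasureTheory.IntegrableOn.mono_set _ ball_subset_closedBall
      exact (hfc.norm.integrableOn_compact (isCompact_closedBall a r))
    have harith : r * (Real.pi * r^2 * (C₂ * r / W)) = (Real.pi * r^4/2) * (2*C₂/W) := by
      field_simp
    have hwd : ‖wd f a‖ ≤ 2*C₂/W := by
      have hu : ∀ w ∈ ball a r, ‖(starRingEnd ℂ) (w - a)‖ ≤ r := by
        intro w hw
        rw [RCLike.norm_conj]
        rw [mem_ball, dist_eq_norm] at hw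
        exact hw.le
      -- we need the sup bound over all w; restrict integral estimate to the ball
      have hmain' : ‖∫ w in ball a r, (starRingEnd ℂ) (w - a) * g w‖
          ≤ r * (Real.pi * r^2 * (C₂ * r / W)) := by
        have hint1 : MeasureTheory.IntegrableOn
            (fun w => ‖(starRingEnd ℂ) (w - a) * g w‖) (ball a r) := by
          apply MeasureTheory.IntegrableOn.mono_set _ ball_subset_closedBall
          apply ContinuousOn.integrableOn_compact (isCompact_closedBall a r)
          exact ((Complex.continuous_conj.comp
            (continuous_id.sub continuous_const)).continuousOn.mul hfc).norm
        calc ‖∫ w in ball a r, (starRingEnd ℂ) (w - a) * g w‖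
            ≤ ∫ w in ball a r, ‖(starRingEnd ℂ) (w - a) * g w‖ :=
              MeasureTheory.norm_integral_le_integral_norm _
          _ ≤ ∫ w in ball a r, r * ‖f w - c‖ := by
              apply MeasureTheory.setIntegral_mono_on hint1 (hgnormint.const_mul r)
                measurableSet_ball
              intro w hw
              rw [norm_mul]
              exact mul_le_mul_of_nonneg_right (hu w hw) (norm_nonneg _)
          _ = r * ∫ w in ball a r, ‖f w - c‖ := by
              rw [MeasureTheory.integral_const_mul]
          _ ≤ r * (Real.pi * r^2 * (C₂ * r / W)) :=
              mul_le_mul_of_nonneg_left hbound hr.1.le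
      rw [hI1] at hmain'
      rw [norm_smul, Real.norm_eq_abs, _root_.abs_of_pos (div_pos (mul_pos Real.pi_pos (pow_pos hr.1 4)) two_pos)] at hmain'
      rw [harith] at hmain'
      have hwg : wd g a = wd f a := wd_sub_const f c a
      rw [hwg] at hmain'
      exact le_of_mul_le_mul_left hmain' (div_pos (mul_pos Real.pi_pos (pow_pos hr.1 4)) two_pos)
    have hwdb : ‖wdb f a‖ ≤ 2*C₂/W := by
      have hu : ∀ w ∈ ball a r, ‖w - a‖ ≤ r := by
        intro w hw
        rw [mem_ball, dist_eq_norm] at hw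
        exact hw.le
      have hmain' : ‖∫ w in ball a r, (w - a) * g w‖
          ≤ r * (Real.pi * r^2 * (C₂ * r / W)) := by
        have hint1 : MeasureTheory.IntegrableOn
            (fun w => ‖(w - a) * g w‖) (ball a r) := by
          apply MeasureTheory.IntegrableOn.mono_set _ ball_subset_closedBall
          apply ContinuousOn.integrableOn_compact (isCompact_closedBall a r)
          exact ((continuous_id.sub continuous_const).continuousOn.mul hfc).norm
        calc ‖∫ w in ball a r, (w - a) * g w‖
            ≤ ∫ w in ball a r, ‖(w - a) * g w‖ :=
              MeasureTheory.norm_integral_le_integral_norm _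
          _ ≤ ∫ w in ball a r, r * ‖f w - c‖ := by
              apply MeasureTheory.setIntegral_mono_on hint1 (hgnormint.const_mul r)
                measurableSet_ball
              intro w hw
              rw [norm_mul]
              exact mul_le_mul_of_nonneg_right (hu w hw) (norm_nonneg _)
          _ = r * ∫ w in ball a r, ‖f w - c‖ := by
              rw [MeasureTheory.integral_const_mul]
          _ ≤ r * (Real.pi * r^2 * (C₂ * r / W)) :=
              mul_le_mul_of_nonneg_left hbound hr.1.le
      rw [hI2] at hmain'
      rw [norm_smul, Real.norm_eq_abs, _root_.abs_of_pos (div_pos (mul_pos Real.pi_pos (pow_pos hr.1 4)) two_pos)] at hmain'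
      rw [harith] at hmain'
      have hwg : wdb g a = wdb f a := wdb_sub_const f c a
      rw [hwg] at hmain'
      exact le_of_mul_le_mul_left hmain' (div_pos (mul_pos Real.pi_pos (pow_pos hr.1 4)) two_pos)
    unfold Dnorm
    calc ‖wd f a‖ + ‖wdb f a‖ ≤ 2*C₂/W + 2*C₂/W := add_le_add hwd hwdb
      _ = 4*C₂/W := by ring
  -- limit as r → R
  have hRα : (0:ℝ) < R^α := Real.rpow_pos_of_pos hRpos α
  have hωR : 0 < ω (R^α) := hpos _ hRα
  have hlim : Filter.Tendsto (fun r : ℝ => 4*C₂/ω (r^α)) (nhdsWithin R (Set.Iio R))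
      (nhds (4*C₂/ω (R^α))) := by
    have h1 : Filter.Tendsto (fun r : ℝ => r^α) (nhdsWithin R (Set.Iio R)) (nhds (R^α)) :=
      (Real.continuousAt_rpow_const R α (Or.inl hRpos.ne')).continuousWithinAt
    have h1' : Filter.Tendsto (fun r : ℝ => r^α) (nhdsWithin R (Set.Iio R))
        (nhdsWithin (R^α) (Set.Ici 0)) := by
      apply tendsto_nhdsWithin_of_tendsto_nhds_of_eventually_within _ h1
      filter_upwards [Ioo_mem_nhdsLT hRpos] with x hx
      exact Set.mem_Ici.mpr (Real.rpow_nonneg hx.1.le α)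
    have h2 : Filter.Tendsto ω (nhdsWithin (R^α) (Set.Ici 0)) (nhds (ω (R^α))) :=
      hcont _ (Set.mem_Ici.mpr hRα.le)
    exact Filter.Tendsto.div tendsto_const_nhds (h2.comp h1') hωR.ne'
  have hfinal : Dnorm f a ≤ 4*C₂/ω (R^α) := by
    apply ge_of_tendsto hlim
    filter_upwards [Ioo_mem_nhdsLT hRpos] with r hr
    exact hkey r hr
  calc Dnorm f a ≤ 4*C₂/ω (R^α) := hfinal
    _ ≤ 12*C₂/ω (R^α) := by
        apply (div_le_div_iff_of_pos_right hωR).mpr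
        linarith
end
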